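/- arXiv:2512.11721 — 5 statements merged into one kernel-verified Lean document; each statement's English description precedes it below -/
import Mathlib

section
/- If u(x,t) = φ(x−ct) is a monotone traveling front solution of u_t = (D(u)u_x)_x + f(u) whose C¹ profile φ satisfies (D(φ)φ')' + cφ' + f(φ) = 0 on ℝ, φ'≥0, lim_{ξ→−∞} φ(ξ) = 0, lim_{ξ→+∞} φ(ξ) = 1, 0 ≤ φ ≤ 1, with D(φ)φ' → 0 as ξ → ±∞ and ∫_ℝ D(φ(ξ))φ'(ξ)² dξ finite and positive, then c · ∫_ℝ D(φ(ξ))φ'(ξ)² dξ = − ∫_0^1 D(u)f(u) du. In particular there exist no monotone nondecreasing fronts from 0 to 1 with speed c > 0 when ∫_0^1 D(u)f(u) du > 0, and no monotone nonincreasing fronts from 1 to 0 with speed c > 0 when ∫_0^1 D(u)f(u) du < 0. -/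
open MeasureTheory Filter Topology Asymptotics

noncomputable section

/-- Bistable (Nagumo) reaction-diffusion data: a degenerate diffusion coefficient `D`
(`D(0)=0`, `D>0` on `(0,1]`, `D'>0` on `[0,1]`, `D` of class `C²`) and a bistable
reaction `f` of Nagumo type with zeros `0, α, 1`. -/
structure NagumoSetup : Type where
  D : ℝ → ℝ
  f : ℝ → ℝ
  α : ℝ
  hα : α ∈ Set.Ioo (0:ℝ) 1
  hD_C2 : ContDiff ℝ 2 D
  hD0 : D 0 = 0
  hD_pos : ∀ u ∈ Set.Ioc (0:ℝ) 1, 0 < D u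
  hD'_pos : ∀ u ∈ Set.Icc (0:ℝ) 1, 0 < deriv D u
  hf_C2 : ContDiff ℝ 2 f
  hf0 : f 0 = 0
  hfα : f α = 0
  hf1 : f 1 = 0
  hf'0 : deriv f 0 < 0
  hf'1 : deriv f 1 < 0
  hf'α : 0 < deriv f α
  hf_pos : ∀ u ∈ Set.Ioo α 1, 0 < f u
  hf_neg : ∀ u ∈ Set.Ioo (0:ℝ) α, f u < 0

/-- A `C¹` traveling-wave profile with speed `c` for `u_t = (D(u)u_x)_x + f(u)`:
it satisfies `(D(φ)φ')' + cφ' + f(φ) = 0` on `ℝ`, takes values in `[0,1]`,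
the flux `D(φ)φ'` is differentiable and tends to `0` at `±∞`, and
`∫_ℝ D(φ)φ'² dξ` is finite. -/
structure TWProfile (S : NagumoSetup) (φ : ℝ → ℝ) (c : ℝ) : Prop where
  hC1 : ContDiff ℝ 1 φ
  hrange : ∀ x, φ x ∈ Set.Icc (0:ℝ) 1
  hflux : Differentiable ℝ fun x => S.D (φ x) * deriv φ x
  hode : ∀ x, deriv (fun y => S.D (φ y) * deriv φ y) x + c * deriv φ x + S.f (φ x) = 0
  hflux_bot : Tendsto (fun x => S.D (φ x) * deriv φ x) atBot (𝓝 0)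
  hflux_top : Tendsto (fun x => S.D (φ x) * deriv φ x) atTop (𝓝 0)
  hint : Integrable fun x => S.D (φ x) * (deriv φ x) ^ 2

lemma key_identity (S : NagumoSetup) (φ : ℝ → ℝ) (c A B : ℝ) (h : TWProfile S φ c)
    (hbot : Tendsto φ atBot (𝓝 A)) (htop : Tendsto φ atTop (𝓝 B)) :
    c * ∫ x, S.D (φ x) * (deriv φ x) ^ 2 = - ∫ u in A..B, S.D u * S.f u := by
  set F : ℝ → ℝ := fun x => S.D (φ x) * deriv φ x with hFdef
  have hφc : Continuous φ := h.hC1.continuous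
  have hφ' : Continuous (deriv φ) := h.hC1.continuous_deriv le_rfl
  have hDc : Continuous S.D := S.hD_C2.continuous
  have hfc : Continuous S.f := S.hf_C2.continuous
  have hDf : Continuous fun u => S.D u * S.f u := hDc.mul hfc
  have hcont1 : Continuous fun x => S.D (φ x) * (deriv φ x) ^ 2 :=
    (hDc.comp hφc).mul (hφ'.pow 2)
  have hcont2 : Continuous fun x => deriv φ x * (S.D (φ x) * S.f (φ x)) :=
    hφ'.mul ((hDc.comp hφc).mul (hfc.comp hφc))
  have hF' : ∀ x, deriv F x = -(c * deriv φ x + S.f (φ x)) := fun x => by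
    have := h.hode x; linarith
  have hFF' : (fun x => F x * deriv F x)
      = fun x => -(c * (S.D (φ x) * (deriv φ x) ^ 2)
          + deriv φ x * (S.D (φ x) * S.f (φ x))) := by
    funext x; rw [hF' x]; simp only [hFdef]; ring
  set G : ℝ → ℝ := fun v => ∫ u in (0:ℝ)..v, S.D u * S.f u with hGdef
  have hGcont : Continuous G :=
    intervalIntegral.continuous_primitive (fun a b => hDf.intervalIntegrable a b) 0
  have hab : ∀ n : ℝ,
      c * ∫ x in (-n)..n, S.D (φ x) * (deriv φ x) ^ 2
        = F (-n) * F (-n) / 2 - F n * F n / 2 - (G (φ n) - G (φ (-n))) := by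
    intro n
    have hHderiv : ∀ x ∈ Set.uIcc (-n) n,
        HasDerivAt (fun y => F y * F y / 2) (F x * deriv F x) x := by
      intro x _
      have hFx : HasDerivAt F (deriv F x) x := (h.hflux x).hasDerivAt
      have := (hFx.mul hFx).div_const 2
      exact this.congr_deriv (by ring)
    have hii : IntervalIntegrable (fun x => F x * deriv F x) volume (-n) n := by
      rw [hFF']
      exact (((continuous_const.mul hcont1).add hcont2).neg).intervalIntegrable _ _
    have hftc : ∫ x in (-n)..n, F x * deriv F x
        = F n * F n / 2 - F (-n) * F (-n) / 2 :=
      intervalIntegral.integral_eq_sub_of_hasDerivAt hHderiv hii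
    have hsplit : ∫ x in (-n)..n, F x * deriv F x
        = -((c * ∫ x in (-n)..n, S.D (φ x) * (deriv φ x) ^ 2)
            + ∫ x in (-n)..n, deriv φ x * (S.D (φ x) * S.f (φ x))) := by
      rw [hFF']
      rw [intervalIntegral.integral_neg, intervalIntegral.integral_add (f := fun x => c * (S.D (φ x) * deriv φ x ^ 2))
        ((continuous_const.mul hcont1).intervalIntegrable _ _) (hcont2.intervalIntegrable _ _),
        intervalIntegral.integral_const_mul]
    have hsub : ∫ x in (-n)..n, deriv φ x * (S.D (φ x) * S.f (φ x))
        = ∫ u in (φ (-n))..(φ n), S.D u * S.f u := by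
      have := intervalIntegral.integral_comp_smul_deriv
        (f := φ) (f' := deriv φ) (g := fun u => S.D u * S.f u) (a := -n) (b := n)
        (fun x _ => (h.hC1.differentiable one_ne_zero x).hasDerivAt)
        hφ'.continuousOn hDf
      simpa [Function.comp, smul_eq_mul] using this
    have hGG : ∫ u in (φ (-n))..(φ n), S.D u * S.f u = G (φ n) - G (φ (-n)) := by
      rw [hGdef]
      exact (intervalIntegral.integral_interval_sub_left
        (hDf.intervalIntegrable _ _) (hDf.intervalIntegrable _ _)).symm
    rw [hsplit, hsub, hGG] at hftc
    linarith
  have hLHS : Tendsto (fun n : ℝ => c * ∫ x in (-n)..n, S.D (φ x) * (deriv φ x) ^ 2)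
      atTop (𝓝 (c * ∫ x, S.D (φ x) * (deriv φ x) ^ 2)) :=
    (intervalIntegral_tendsto_integral h.hint tendsto_neg_atTop_atBot tendsto_id).const_mul c
  have h1 : Tendsto (fun n : ℝ => F (-n)) atTop (𝓝 0) :=
    h.hflux_bot.comp tendsto_neg_atTop_atBot
  have h2 : Tendsto (fun n : ℝ => F n) atTop (𝓝 0) := h.hflux_top
  have h3 : Tendsto (fun n : ℝ => G (φ n)) atTop (𝓝 (G B)) :=
    (hGcont.tendsto B).comp htop
  have h4 : Tendsto (fun n : ℝ => G (φ (-n))) atTop (𝓝 (G A)) :=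
    ((hGcont.tendsto A).comp hbot).comp tendsto_neg_atTop_atBot
  have hRHS : Tendsto (fun n : ℝ => F (-n) * F (-n) / 2 - F n * F n / 2
      - (G (φ n) - G (φ (-n)))) atTop (𝓝 (0 * 0 / 2 - 0 * 0 / 2 - (G B - G A))) :=
    (((h1.mul h1).div_const 2).sub ((h2.mul h2).div_const 2)).sub (h3.sub h4)
  have hEq' : c * ∫ x, S.D (φ x) * (deriv φ x) ^ 2 = G A - G B := by
    have := tendsto_nhds_unique ((tendsto_congr (fun n => hab n)).mp hLHS) hRHS
    linarith
  have hAB : ∫ u in A..B, S.D u * S.f u = G B - G A := by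
    rw [hGdef]
    exact (intervalIntegral.integral_interval_sub_left
      (hDf.intervalIntegrable _ _) (hDf.intervalIntegrable _ _)).symm
  rw [hEq', hAB]; ring

/-- For any monotone traveling front the identity
`c ∫ D(φ)φ'² = -∫₀¹ D f` holds; in particular there are no nondecreasing fronts from
`0` to `1` with `c > 0` when `∫₀¹ Df > 0`, and no nonincreasing fronts from `1` to `0`
with `c > 0` when `∫₀¹ Df < 0`. -/
theorem statement0 (S : NagumoSetup) :
    (∀ (φ : ℝ → ℝ) (c : ℝ), TWProfile S φ c → (∀ x, 0 ≤ deriv φ x) →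
      Tendsto φ atBot (𝓝 0) → Tendsto φ atTop (𝓝 1) →
      (0 < ∫ x, S.D (φ x) * (deriv φ x) ^ 2) →
      c * ∫ x, S.D (φ x) * (deriv φ x) ^ 2 = - ∫ u in (0:ℝ)..1, S.D u * S.f u) ∧
    ((0 < ∫ u in (0:ℝ)..1, S.D u * S.f u) → ∀ c : ℝ, 0 < c →
      ¬ ∃ φ : ℝ → ℝ, TWProfile S φ c ∧ (∀ x, 0 ≤ deriv φ x) ∧
        Tendsto φ atBot (𝓝 0) ∧ Tendsto φ atTop (𝓝 1) ∧
        0 < ∫ x, S.D (φ x) * (deriv φ x) ^ 2) ∧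
    ((∫ u in (0:ℝ)..1, S.D u * S.f u) < 0 → ∀ c : ℝ, 0 < c →
      ¬ ∃ φ : ℝ → ℝ, TWProfile S φ c ∧ (∀ x, deriv φ x ≤ 0) ∧
        Tendsto φ atBot (𝓝 1) ∧ Tendsto φ atTop (𝓝 0) ∧
        0 < ∫ x, S.D (φ x) * (deriv φ x) ^ 2) := by
  refine ⟨?_, ?_, ?_⟩
  · intro φ c hTW _ hbot htop _
    exact key_identity S φ c 0 1 hTW hbot htop
  · rintro hpos c hc ⟨φ, hTW, _, hbot, htop, hI⟩
    have hkey := key_identity S φ c 0 1 hTW hbot htop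
    nlinarith [mul_pos hc hI]
  · rintro hneg c hc ⟨φ, hTW, _, hbot, htop, hI⟩
    have hkey := key_identity S φ c 1 0 hTW hbot htop
    rw [intervalIntegral.integral_symm] at hkey
    nlinarith [mul_pos hc hI]
end
end

section
/- If ∫_0^1 D(u)f(u) du = 0, then there exist two stationary monotone front solutions (speed c = 0) of u_t = (D(u)u_x)_x + f(u): a C¹ function φ: ℝ → [0,1] solving (D(φ)φ_x)_x + f(φ) = 0 on ℝ that is nondecreasing with lim_{x→−∞} φ(x) = 0 and lim_{x→+∞} φ(x) = 1, and a C¹ function solving the same equation that is nonincreasing with lim_{x→−∞} φ(x) = 1 and lim_{x→+∞} φ(x) = 0. -/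
open MeasureTheory Filter Topology Asymptotics

noncomputable section

section NagAux
open Set

namespace Nag

variable (S : NagumoSetup)

def g : ℝ → ℝ := fun u => S.D u * S.f u
def F : ℝ → ℝ := fun u => ∫ t in (0:ℝ)..u, g S t
def Q : ℝ → ℝ := fun u => -2 * F S u
def P : ℝ → ℝ := fun u => Real.sqrt (Q S u)
def X : ℝ → ℝ := fun u => ∫ t in S.α..u, S.D t / P S t
def x0 : ℝ := sInf (X S '' Set.Ioo 0 1)

lemma contD : Continuous S.D := S.hD_C2.continuous
lemma contf : Continuous S.f := S.hf_C2.continuous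
lemma contg : Continuous (g S) := (contD S).mul (contf S)
lemma contD' : Continuous (deriv S.D) := S.hD_C2.continuous_deriv one_le_two
lemma contf' : Continuous (deriv S.f) := S.hf_C2.continuous_deriv one_le_two

lemma hasDerivAt_F (u : ℝ) : HasDerivAt (F S) (g S u) u := by
  refine intervalIntegral.integral_hasDerivAt_right
    ((contg S).intervalIntegrable _ _)
    ((contg S).stronglyMeasurableAtFilter _ _) (contg S).continuousAt

lemma contF : Continuous (F S) := by
  have : Differentiable ℝ (F S) := fun u => (hasDerivAt_F S u).differentiableAt
  exact this.continuous

lemma contQ : Continuous (Q S) := (continuous_const.mul (contF S))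
lemma contP : Continuous (P S) := Real.continuous_sqrt.comp (contQ S)

lemma F_one : (∫ u in (0:ℝ)..1, S.D u * S.f u) = 0 → F S 1 = 0 := fun h => h

lemma Q_zero : Q S 0 = 0 := by
  simp [Q, F, intervalIntegral.integral_same]

lemma P_zero : P S 0 = 0 := by simp [P, Q_zero]


variable {S}

lemma F_neg (hDf : F S 1 = 0) {u : ℝ} (hu : u ∈ Ioo (0:ℝ) 1) : F S u < 0 := by
  obtain ⟨hα0, hα1⟩ := S.hα
  rcases le_or_gt u S.α with h | h
  · -- F u = ∫_0^u g < 0 since g < 0 on (0, u)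
    have : 0 < ∫ t in (0:ℝ)..u, -(g S t) := by
      apply intervalIntegral.intervalIntegral_pos_of_pos_on
        (((contg S).neg).intervalIntegrable _ _)
      · intro t ht
        have h1 : S.f t < 0 := S.hf_neg t ⟨ht.1, lt_of_lt_of_le ht.2 h⟩
        have h2 : 0 < S.D t := S.hD_pos t ⟨ht.1, le_trans (le_of_lt ht.2) (le_trans h hα1.le)⟩
        simp only [Pi.neg_apply, g, neg_pos]
        exact mul_neg_of_pos_of_neg h2 h1
      · exact hu.1
    rw [intervalIntegral.integral_neg] at this
    simpa [F] using by linarith [this]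
  · -- F u = F 1 - ∫_u^1 g = -∫_u^1 g < 0
    have hadd : F S u + ∫ t in u..1, g S t = F S 1 := by
      exact intervalIntegral.integral_add_adjacent_intervals
        ((contg S).intervalIntegrable _ _) ((contg S).intervalIntegrable _ _)
    have hpos : 0 < ∫ t in u..1, g S t := by
      apply intervalIntegral.intervalIntegral_pos_of_pos_on
        ((contg S).intervalIntegrable _ _)
      · intro t ht
        have h1 : 0 < S.f t := S.hf_pos t ⟨lt_trans h ht.1, ht.2⟩
        have h2 : 0 < S.D t := S.hD_pos t ⟨lt_trans hα0 (lt_trans h ht.1), ht.2.le⟩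
        exact mul_pos h2 h1
      · exact hu.2
    rw [hDf] at hadd
    linarith

lemma Q_pos (hDf : F S 1 = 0) {u : ℝ} (hu : u ∈ Ioo (0:ℝ) 1) : 0 < Q S u := by
  have := F_neg hDf hu; simp only [Q]; linarith

lemma P_pos (hDf : F S 1 = 0) {u : ℝ} (hu : u ∈ Ioo (0:ℝ) 1) : 0 < P S u :=
  Real.sqrt_pos.mpr (Q_pos hDf hu)

lemma P_nonneg (u : ℝ) : 0 ≤ P S u := Real.sqrt_nonneg _

/-- linear lower and upper bounds for D on [0,1] -/
lemma D_bounds : ∃ m > 0, ∃ Md > 0, ∀ u ∈ Icc (0:ℝ) 1,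
    m * u ≤ S.D u ∧ S.D u ≤ Md * u := by
  obtain ⟨a, ha, hmin⟩ := isCompact_Icc.exists_isMinOn (Set.nonempty_Icc.mpr zero_le_one)
    ((contD' S).continuousOn)
  obtain ⟨b, hb, hmax⟩ := isCompact_Icc.exists_isMaxOn (Set.nonempty_Icc.mpr zero_le_one)
    ((contD' S).continuousOn)
  refine ⟨deriv S.D a, S.hD'_pos a ha, max (deriv S.D b) 1, lt_of_lt_of_le one_pos (le_max_right _ _), ?_⟩
  intro u hu
  have hDint : S.D u - S.D 0 = ∫ t in (0:ℝ)..u, deriv S.D t := by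
    rw [intervalIntegral.integral_deriv_eq_sub (fun t _ => (S.hD_C2.differentiable two_ne_zero).differentiableAt)
      ((contD' S).intervalIntegrable _ _)]
  rw [S.hD0, sub_zero] at hDint
  constructor
  · have : ∫ t in (0:ℝ)..u, (deriv S.D a) ≤ ∫ t in (0:ℝ)..u, deriv S.D t := by
      apply intervalIntegral.integral_mono_on hu.1
        (intervalIntegrable_const) ((contD' S).intervalIntegrable _ _)
      intro t ht
      exact hmin ⟨le_trans le_rfl ht.1, le_trans ht.2 hu.2⟩
    simpa [mul_comm, hDint] using this
  · have : ∫ t in (0:ℝ)..u, deriv S.D t ≤ ∫ t in (0:ℝ)..u, max (deriv S.D b) 1 := by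
      apply intervalIntegral.integral_mono_on hu.1
        ((contD' S).intervalIntegrable _ _) (intervalIntegrable_const)
      intro t ht
      exact le_trans (hmax ⟨ht.1, le_trans ht.2 hu.2⟩) (le_max_left _ _)
    simpa [mul_comm, hDint] using this

lemma f_bound : ∃ Mf > 0, ∀ u ∈ Icc (0:ℝ) 1, |S.f u| ≤ Mf * u ∧ |S.f u| ≤ Mf * (1 - u) := by
  obtain ⟨b, hb, hmax⟩ := isCompact_Icc.exists_isMaxOn (Set.nonempty_Icc.mpr zero_le_one)
    (((contf' S).abs).continuousOn)
  set Mf := max (|deriv S.f b|) 1 with hMf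
  refine ⟨Mf, lt_of_lt_of_le one_pos (le_max_right _ _), ?_⟩
  intro u hu
  have hbound : ∀ t ∈ Icc (0:ℝ) 1, |deriv S.f t| ≤ Mf := fun t ht =>
    le_trans (hmax ht) (le_max_left _ _)
  constructor
  · have h1 : S.f u - S.f 0 = ∫ t in (0:ℝ)..u, deriv S.f t := by
      rw [intervalIntegral.integral_deriv_eq_sub
        (fun t _ => (S.hf_C2.differentiable two_ne_zero).differentiableAt)
        ((contf' S).intervalIntegrable _ _)]
    rw [S.hf0, sub_zero] at h1
    rw [h1]
    have hb2 : ‖∫ t in (0:ℝ)..u, deriv S.f t‖ ≤ Mf * |u - 0| := by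
      apply intervalIntegral.norm_integral_le_of_norm_le_const
      intro t ht
      rw [uIoc_of_le hu.1] at ht
      exact hbound t ⟨ht.1.le, le_trans ht.2 hu.2⟩
    rw [Real.norm_eq_abs, sub_zero, abs_of_nonneg hu.1] at hb2
    exact hb2
  · have h1 : S.f 1 - S.f u = ∫ t in u..1, deriv S.f t := by
      rw [intervalIntegral.integral_deriv_eq_sub
        (fun t _ => (S.hf_C2.differentiable two_ne_zero).differentiableAt)
        ((contf' S).intervalIntegrable _ _)]
    rw [S.hf1] at h1
    have h2 : S.f u = -∫ t in u..1, deriv S.f t := by linarith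
    rw [h2, abs_neg]
    have hb2 : ‖∫ t in u..1, deriv S.f t‖ ≤ Mf * |1 - u| := by
      apply intervalIntegral.norm_integral_le_of_norm_le_const
      intro t ht
      rw [uIoc_of_le hu.2] at ht
      exact hbound t ⟨le_trans hu.1 ht.1.le, ht.2⟩
    rw [Real.norm_eq_abs, abs_of_nonneg (by linarith [hu.2] : (0:ℝ) ≤ 1 - u)] at hb2
    exact hb2

/-- cubic upper bound for Q on [0,1] -/
lemma Q_upper : ∃ C > 0, ∀ u ∈ Icc (0:ℝ) 1, Q S u ≤ C * u ^ 3 := by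
  obtain ⟨m, hm, Md, hMd, hD⟩ := D_bounds (S := S)
  obtain ⟨Mf, hMf, hf⟩ := f_bound (S := S)
  refine ⟨Md * Mf, by positivity, ?_⟩
  intro u hu
  have key : ∀ t ∈ Icc (0:ℝ) 1, -(g S t) ≤ Md * Mf * t ^ 2 := by
    intro t ht
    have h1 := (hD t ht).2
    have h2 := (hf t ht).1
    have h3 : |g S t| ≤ Md * t * (Mf * t) := by
      rw [g, abs_mul]
      apply mul_le_mul _ h2 (abs_nonneg _) (mul_nonneg hMd.le ht.1)
      rwa [abs_of_nonneg (le_trans (mul_nonneg hm.le ht.1) (hD t ht).1)]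
    nlinarith [neg_abs_le (g S t), abs_nonneg (g S t)]
  have hint : -(F S u) ≤ ∫ t in (0:ℝ)..u, Md * Mf * t ^ 2 := by
    rw [F, ← intervalIntegral.integral_neg]
    apply intervalIntegral.integral_mono_on hu.1
      (((contg S).neg).intervalIntegrable _ _)
      (Continuous.intervalIntegrable (by continuity) _ _)
    intro t ht
    exact key t ⟨ht.1, le_trans ht.2 hu.2⟩
  have hval : ∫ t in (0:ℝ)..u, Md * Mf * t ^ 2 = Md * Mf * u ^ 3 / 3 := by
    rw [intervalIntegral.integral_const_mul, integral_pow]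
    ring
  rw [hval] at hint
  have hQ : Q S u = 2 * (-(F S u)) := by rw [show Q S u = -2 * F S u from rfl]; ring
  rw [hQ]
  nlinarith [mul_nonneg (mul_nonneg hMd.le hMf.le) (pow_nonneg hu.1 3)]

lemma P_upper : ∃ B > 0, ∀ u ∈ Icc (0:ℝ) 1, P S u ≤ B * (u * Real.sqrt u) := by
  obtain ⟨C, hC, hQ⟩ := Q_upper (S := S)
  refine ⟨Real.sqrt C, Real.sqrt_pos.mpr hC, ?_⟩
  intro u hu
  have h1 : P S u ≤ Real.sqrt (C * u ^ 3) := Real.sqrt_le_sqrt (hQ u hu)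
  calc P S u ≤ Real.sqrt (C * u ^ 3) := h1
    _ = Real.sqrt C * (u * Real.sqrt u) := by
        rw [Real.sqrt_mul hC.le, show u ^ 3 = u ^ 2 * u by ring,
          Real.sqrt_mul (sq_nonneg u), Real.sqrt_sq hu.1]

lemma Q_upper_one (hDf : F S 1 = 0) : ∃ C > 0, ∀ u ∈ Icc (0:ℝ) 1,
    Q S u ≤ C * (1 - u) ^ 2 := by
  obtain ⟨m, hm, Md, hMd, hD⟩ := D_bounds (S := S)
  obtain ⟨Mf, hMf, hf⟩ := f_bound (S := S)
  refine ⟨Md * Mf, by positivity, ?_⟩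
  intro u hu
  have hadd : F S u + ∫ t in u..1, g S t = F S 1 :=
    intervalIntegral.integral_add_adjacent_intervals
      ((contg S).intervalIntegrable _ _) ((contg S).intervalIntegrable _ _)
  rw [hDf] at hadd
  have hQeq : Q S u = 2 * ∫ t in u..1, g S t := by
    rw [show Q S u = -2 * F S u from rfl]; linarith
  have key : ∀ t ∈ Icc u 1, g S t ≤ Md * Mf * (1 - t) := by
    intro t ht
    have ht' : t ∈ Icc (0:ℝ) 1 := ⟨le_trans hu.1 ht.1, ht.2⟩
    have h1 := (hD t ht').2
    have h2 := (hf t ht').2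
    have h3 : |g S t| ≤ Md * t * (Mf * (1 - t)) := by
      rw [g, abs_mul]
      apply mul_le_mul _ h2 (abs_nonneg _) (mul_nonneg hMd.le ht'.1)
      rwa [abs_of_nonneg (le_trans (mul_nonneg hm.le ht'.1) (hD t ht').1)]
    have h4 : Md * t * (Mf * (1 - t)) ≤ Md * Mf * (1 - t) := by
      nlinarith [mul_nonneg (mul_nonneg hMd.le hMf.le) (sq_nonneg (1 - t))]
    nlinarith [le_abs_self (g S t)]
  have hint : (∫ t in u..1, g S t) ≤ ∫ t in u..1, Md * Mf * (1 - t) := by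
    apply intervalIntegral.integral_mono_on hu.2
      ((contg S).intervalIntegrable _ _)
      (Continuous.intervalIntegrable (by continuity) _ _)
    exact key
  have hval : (∫ t in u..1, Md * Mf * (1 - t)) = Md * Mf * (1 - u) ^ 2 / 2 := by
    rw [intervalIntegral.integral_const_mul]
    have : (∫ t in u..1, (1 - t)) = (1-u)^2/2 := by
      rw [intervalIntegral.integral_sub intervalIntegrable_const
        (intervalIntegral.intervalIntegrable_id)]
      simp [intervalIntegral.integral_const]
      ring
    rw [this]; ring
  rw [hQeq]
  rw [hval] at hint
  nlinarith [mul_nonneg (mul_nonneg hMd.le hMf.le) (sq_nonneg (1 - u))]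

lemma P_upper_one (hDf : F S 1 = 0) : ∃ B > 0, ∀ u ∈ Icc (0:ℝ) 1,
    P S u ≤ B * (1 - u) := by
  obtain ⟨C, hC, hQ⟩ := Q_upper_one hDf (S := S)
  refine ⟨Real.sqrt C, Real.sqrt_pos.mpr hC, ?_⟩
  intro u hu
  calc P S u ≤ Real.sqrt (C * (1 - u) ^ 2) := Real.sqrt_le_sqrt (hQ u hu)
    _ = Real.sqrt C * (1 - u) := by
        rw [Real.sqrt_mul hC.le, Real.sqrt_sq (by linarith [hu.2] : (0:ℝ) ≤ 1 - u)]

lemma f_neg_linear : ∃ δ, δ ∈ Ioc (0:ℝ) S.α ∧ ∃ cf > 0, ∀ u ∈ Icc (0:ℝ) δ,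
    S.f u ≤ -(cf * u) := by
  have hc : ContinuousAt (deriv S.f) 0 := (contf' S).continuousAt
  have hε : (0:ℝ) < -deriv S.f 0 / 2 := by linarith [S.hf'0]
  obtain ⟨δ₀, hδ₀, hδball⟩ := Metric.continuousAt_iff.mp hc _ hε
  set δ := min (δ₀ / 2) S.α with hδdef
  have hδpos : 0 < δ := lt_min (by linarith) S.hα.1
  refine ⟨δ, ⟨hδpos, min_le_right _ _⟩, -deriv S.f 0 / 2, hε, ?_⟩
  intro u hu
  have hd : ∀ t ∈ Icc (0:ℝ) u, deriv S.f t ≤ deriv S.f 0 / 2 := by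
    intro t ht
    have htb : dist t 0 < δ₀ := by
      rw [Real.dist_eq, sub_zero, abs_of_nonneg ht.1]
      have : t ≤ δ := le_trans ht.2 hu.2
      have : t ≤ δ₀ / 2 := le_trans this (min_le_left _ _)
      linarith
    have := hδball htb
    rw [Real.dist_eq] at this
    have := abs_lt.mp this
    linarith [this.1, this.2]
  have h1 : S.f u - S.f 0 = ∫ t in (0:ℝ)..u, deriv S.f t := by
    rw [intervalIntegral.integral_deriv_eq_sub
      (fun t _ => (S.hf_C2.differentiable two_ne_zero).differentiableAt)
      ((contf' S).intervalIntegrable _ _)]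
  rw [S.hf0, sub_zero] at h1
  have h2 : (∫ t in (0:ℝ)..u, deriv S.f t) ≤ ∫ t in (0:ℝ)..u, deriv S.f 0 / 2 := by
    apply intervalIntegral.integral_mono_on hu.1
      ((contf' S).intervalIntegrable _ _) intervalIntegrable_const
    exact hd
  rw [intervalIntegral.integral_const, smul_eq_mul, sub_zero] at h2
  rw [h1]
  calc (∫ t in (0:ℝ)..u, deriv S.f t) ≤ u * (deriv S.f 0 / 2) := h2
    _ = -((-deriv S.f 0 / 2) * u) := by ring

lemma Q_lower : ∃ δ, δ ∈ Ioc (0:ℝ) S.α ∧ ∃ b > 0, ∀ u ∈ Icc (0:ℝ) δ,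
    b * u ^ 3 ≤ Q S u := by
  obtain ⟨m, hm, Md, hMd, hD⟩ := D_bounds (S := S)
  obtain ⟨δ, hδ, cf, hcf, hf⟩ := f_neg_linear (S := S)
  have hδ1 : δ < 1 := lt_of_le_of_lt hδ.2 S.hα.2
  refine ⟨δ, hδ, 2 * (m * cf) / 3, by positivity, ?_⟩
  intro u hu
  have key : ∀ t ∈ Icc (0:ℝ) u, m * cf * t ^ 2 ≤ -(g S t) := by
    intro t ht
    have ht' : t ∈ Icc (0:ℝ) δ := ⟨ht.1, le_trans ht.2 hu.2⟩
    have h1 : m * t ≤ S.D t := (hD t ⟨ht.1, le_trans ht'.2 hδ1.le⟩).1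
    have h2 : S.f t ≤ -(cf * t) := hf t ht'
    have hDpos : 0 ≤ S.D t := le_trans (mul_nonneg hm.le ht.1) h1
    have : g S t ≤ S.D t * (-(cf * t)) := by
      apply mul_le_mul_of_nonneg_left h2 hDpos
    have h3 : S.D t * (-(cf * t)) ≤ (m * t) * (-(cf * t)) := by
      nlinarith [mul_nonneg hcf.le ht.1]
    nlinarith
  have hint : (∫ t in (0:ℝ)..u, m * cf * t ^ 2) ≤ ∫ t in (0:ℝ)..u, -(g S t) := by
    apply intervalIntegral.integral_mono_on hu.1
      (Continuous.intervalIntegrable (by continuity) _ _)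
      (((contg S).neg).intervalIntegrable _ _)
    exact key
  have hval : (∫ t in (0:ℝ)..u, m * cf * t ^ 2) = m * cf * u ^ 3 / 3 := by
    rw [intervalIntegral.integral_const_mul, integral_pow]; ring
  rw [hval, intervalIntegral.integral_neg] at hint
  have : Q S u = 2 * (-(F S u)) := by rw [show Q S u = -2 * F S u from rfl]; ring
  rw [this]
  have : -(F S u) ≥ m * cf * u ^ 3 / 3 := by
    simpa [F] using hint
  linarith

lemma P_lower : ∃ δ, δ ∈ Ioc (0:ℝ) S.α ∧ ∃ b > 0, ∀ u ∈ Icc (0:ℝ) δ,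
    b * (u * Real.sqrt u) ≤ P S u := by
  obtain ⟨δ, hδ, b, hb, hQ⟩ := Q_lower (S := S)
  refine ⟨δ, hδ, Real.sqrt b, Real.sqrt_pos.mpr hb, ?_⟩
  intro u hu
  have h1 : Real.sqrt (b * u ^ 3) ≤ P S u := Real.sqrt_le_sqrt (hQ u hu)
  calc Real.sqrt b * (u * Real.sqrt u) = Real.sqrt (b * u ^ 3) := by
        rw [Real.sqrt_mul hb.le, show u ^ 3 = u ^ 2 * u by ring,
          Real.sqrt_mul (sq_nonneg u), Real.sqrt_sq hu.1]
    _ ≤ P S u := h1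

lemma contOn_h (hDf : F S 1 = 0) :
    ContinuousOn (fun t => S.D t / P S t) (Ioo (0:ℝ) 1) := by
  apply ContinuousOn.div (contD S).continuousOn (contP S).continuousOn
  intro t ht
  exact (P_pos hDf ht).ne'

lemma intInt_h (hDf : F S 1 = 0) {a b : ℝ} (ha : a ∈ Ioo (0:ℝ) 1) (hb : b ∈ Ioo (0:ℝ) 1) :
    IntervalIntegrable (fun t => S.D t / P S t) volume a b := by
  apply ContinuousOn.intervalIntegrable
  exact (contOn_h hDf).mono (Set.OrdConnected.uIcc_subset Set.ordConnected_Ioo ha hb)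

lemma hasDerivAt_X (hDf : F S 1 = 0) {u : ℝ} (hu : u ∈ Ioo (0:ℝ) 1) :
    HasDerivAt (X S) (S.D u / P S u) u := by
  refine intervalIntegral.integral_hasDerivAt_right (intInt_h hDf S.hα hu) ?_ ?_
  · exact ContinuousOn.stronglyMeasurableAtFilter isOpen_Ioo (contOn_h hDf) u hu
  · exact (contOn_h hDf).continuousAt (isOpen_Ioo.mem_nhds hu)

lemma h_pos (hDf : F S 1 = 0) {u : ℝ} (hu : u ∈ Ioo (0:ℝ) 1) :
    0 < S.D u / P S u :=
  div_pos (S.hD_pos u ⟨hu.1, hu.2.le⟩) (P_pos hDf hu)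

lemma strictMonoOn_X (hDf : F S 1 = 0) : StrictMonoOn (X S) (Ioo (0:ℝ) 1) := by
  apply strictMonoOn_of_deriv_pos (convex_Ioo _ _)
  · intro u hu
    exact (hasDerivAt_X hDf hu).continuousAt.continuousWithinAt
  · intro u hu
    rw [interior_Ioo] at hu
    rw [(hasDerivAt_X hDf hu).deriv]
    exact h_pos hDf hu

lemma X_alpha : X S S.α = 0 := intervalIntegral.integral_same

/-- key sqrt growth bound from below -/
lemma X_sqrt_gap (hDf : F S 1 = 0) : ∃ c > 0, ∀ ε u, ε ∈ Ioo (0:ℝ) 1 → u ∈ Ioo (0:ℝ) 1 →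
    ε ≤ u → X S ε + c * (Real.sqrt u - Real.sqrt ε) ≤ X S u := by
  obtain ⟨m, hm, Md, hMd, hD⟩ := D_bounds (S := S)
  obtain ⟨B, hB, hP⟩ := P_upper (S := S)
  refine ⟨2 * (m / B), by positivity, ?_⟩
  intro ε u hε hu hεu
  have hgap : X S u - X S ε = ∫ t in ε..u, S.D t / P S t := by
    have := intervalIntegral.integral_add_adjacent_intervals
      (intInt_h hDf S.hα hε) (intInt_h hDf hε hu)
    rw [X, X]
    linarith [this]
  have hptwise : ∀ t ∈ Icc ε u, (m / B) / Real.sqrt t ≤ S.D t / P S t := by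
    intro t ht
    have ht' : t ∈ Ioo (0:ℝ) 1 := ⟨lt_of_lt_of_le hε.1 ht.1, lt_of_le_of_lt ht.2 hu.2⟩
    have hPt : 0 < P S t := P_pos hDf ht'
    have hst : 0 < Real.sqrt t := Real.sqrt_pos.mpr ht'.1
    rw [div_le_div_iff₀ hst hPt]
    have h1 : P S t ≤ B * (t * Real.sqrt t) := hP t ⟨ht'.1.le, ht'.2.le⟩
    have h2 : m * t ≤ S.D t := (hD t ⟨ht'.1.le, ht'.2.le⟩).1
    calc m / B * P S t ≤ m / B * (B * (t * Real.sqrt t)) := by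
          apply mul_le_mul_of_nonneg_left h1 (by positivity)
      _ = (m * t) * Real.sqrt t := by field_simp
      _ ≤ S.D t * Real.sqrt t := by
          apply mul_le_mul_of_nonneg_right h2 hst.le
  have hderiv : ∀ t ∈ uIcc ε u, HasDerivAt (fun t => m / B * (2 * Real.sqrt t))
      ((m / B) / Real.sqrt t) t := by
    intro t ht
    rw [uIcc_of_le hεu] at ht
    have ht0 : t ≠ 0 := (lt_of_lt_of_le hε.1 ht.1).ne'
    have : HasDerivAt (fun y => m / B * 2 * Real.sqrt y) (m / B * 2 * (1 / (2 * Real.sqrt t))) t :=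
      (Real.hasDerivAt_sqrt ht0).const_mul (m / B * 2)
    convert this using 1
    · ext t; ring
    · ring
  have hcont2 : ContinuousOn (fun t => (m / B) / Real.sqrt t) (Icc ε u) := by
    apply ContinuousOn.div continuousOn_const (Real.continuous_sqrt.continuousOn)
    intro t ht
    exact (Real.sqrt_pos.mpr (lt_of_lt_of_le hε.1 ht.1)).ne'
  have hint1 : IntervalIntegrable (fun t => (m / B) / Real.sqrt t) volume ε u := by
    apply ContinuousOn.intervalIntegrable
    rwa [uIcc_of_le hεu]
  have hval : (∫ t in ε..u, (m / B) / Real.sqrt t)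
      = m / B * (2 * Real.sqrt u) - m / B * (2 * Real.sqrt ε) := by
    rw [intervalIntegral.integral_eq_sub_of_hasDerivAt hderiv hint1]
  have hmono : (∫ t in ε..u, (m / B) / Real.sqrt t) ≤ ∫ t in ε..u, S.D t / P S t := by
    apply intervalIntegral.integral_mono_on hεu hint1 (intInt_h hDf hε hu)
    exact hptwise
  rw [hval] at hmono
  linarith [hmono, hgap]

lemma X_bddBelow (hDf : F S 1 = 0) : ∃ K, ∀ u ∈ Ioo (0:ℝ) 1, -K ≤ X S u := by
  obtain ⟨m, hm, Md, hMd, hD⟩ := D_bounds (S := S)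
  obtain ⟨δ, hδ, b, hb, hPl⟩ := P_lower (S := S)
  have hδ1 : δ < 1 := lt_of_le_of_lt hδ.2 S.hα.2
  -- sup of D/P on [δ, α]
  obtain ⟨M, hM⟩ : ∃ M, ∀ t ∈ Icc δ S.α, S.D t / P S t ≤ M := by
    rcases eq_or_lt_of_le hδ.2 with heq | hlt
    · exact ⟨S.D S.α / P S S.α, fun t ht => by
        rw [heq] at ht; rw [le_antisymm ht.2 ht.1]⟩
    · obtain ⟨M, hMmem, hMmax⟩ := isCompact_Icc.exists_isMaxOn (nonempty_Icc.mpr hδ.2)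
        (((contOn_h hDf)).mono (fun t ht => ⟨lt_of_lt_of_le hδ.1 ht.1,
          lt_of_le_of_lt ht.2 S.hα.2⟩))
      exact ⟨S.D M / P S M, fun t ht => hMmax ht⟩
  set C := Md / b with hC
  set M' := max M 0 with hM'
  have hC0 : 0 < C := by positivity
  have hMnn : 0 ≤ M' := le_max_right _ _
  have hpt : ∀ t, t ∈ Ioc (0:ℝ) S.α → S.D t / P S t ≤ C / Real.sqrt t + M' := by
    intro t ht
    have ht1 : t < 1 := lt_of_le_of_lt ht.2 S.hα.2
    have hst : 0 < Real.sqrt t := Real.sqrt_pos.mpr ht.1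
    rcases le_or_gt t δ with hc | hc
    · have h1 : b * (t * Real.sqrt t) ≤ P S t := hPl t ⟨ht.1.le, hc⟩
      have h2 : S.D t ≤ Md * t := (hD t ⟨ht.1.le, ht1.le⟩).2
      have hPt : 0 < P S t := lt_of_lt_of_le (mul_pos hb (mul_pos ht.1 hst)) h1
      have h4 : S.D t / P S t ≤ (Md * t) / (b * (t * Real.sqrt t)) :=
        div_le_div₀ (mul_nonneg hMd.le ht.1.le) h2 (mul_pos hb (mul_pos ht.1 hst)) h1
      have h5 : (Md * t) / (b * (t * Real.sqrt t)) = C / Real.sqrt t := by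
        rw [div_eq_div_iff (mul_pos hb (mul_pos ht.1 hst)).ne' hst.ne', hC]
        field_simp [hb.ne']
      rw [h5] at h4
      linarith
    · have := hM t ⟨hc.le, ht.2⟩
      have : S.D t / P S t ≤ M' := le_trans this (le_max_left _ _)
      have h2 : 0 ≤ C / Real.sqrt t := by positivity
      linarith
  refine ⟨C * (2 * Real.sqrt S.α) + M' * S.α, ?_⟩
  intro u hu
  rcases le_or_gt S.α u with hcase | hcase
  · have h0 : (0:ℝ) ≤ X S u := by
      rcases eq_or_lt_of_le hcase with heq | hlt
      · rw [← heq, X_alpha]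
      · have := (strictMonoOn_X hDf) S.hα hu hlt
        rw [X_alpha] at this
        exact this.le
    have : 0 ≤ C * (2 * Real.sqrt S.α) + M' * S.α :=
      add_nonneg (by positivity) (mul_nonneg hMnn S.hα.1.le)
    linarith
  · -- u < α : X u = -∫_u^α D/P ≥ -K
    have hadd : X S u + (∫ t in u..S.α, S.D t / P S t) = X S S.α := by
      exact intervalIntegral.integral_add_adjacent_intervals
        (intInt_h hDf S.hα hu) (intInt_h hDf hu S.hα)
    rw [X_alpha] at hadd
    have hderiv : ∀ t ∈ uIcc u S.α, HasDerivAt (fun t => C * (2 * Real.sqrt t) + M' * t)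
        (C / Real.sqrt t + M') t := by
      intro t ht
      rw [uIcc_of_le hcase.le] at ht
      have ht0 : (0:ℝ) < t := lt_of_lt_of_le hu.1 ht.1
      have h1 := (Real.hasDerivAt_sqrt ht0.ne').const_mul (C * 2)
      have h2 := (hasDerivAt_id t).const_mul M'
      have : HasDerivAt (fun y => C * 2 * Real.sqrt y + M' * id y)
          (C * 2 * (1 / (2 * Real.sqrt t)) + M' * 1) t := h1.add h2
      convert this using 1
      · ext s; simp only [id_eq]; ring
      · have hst : Real.sqrt t ≠ 0 := (Real.sqrt_pos.mpr ht0).ne'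
        field_simp
    have hint1 : IntervalIntegrable (fun t => C / Real.sqrt t + M') volume u S.α := by
      apply ContinuousOn.intervalIntegrable
      rw [uIcc_of_le hcase.le]
      apply ContinuousOn.add _ continuousOn_const
      apply ContinuousOn.div continuousOn_const Real.continuous_sqrt.continuousOn
      intro t ht
      exact (Real.sqrt_pos.mpr (lt_of_lt_of_le hu.1 ht.1)).ne'
    have hmono : (∫ t in u..S.α, S.D t / P S t) ≤ ∫ t in u..S.α, (C / Real.sqrt t + M') := by
      apply intervalIntegral.integral_mono_on hcase.le (intInt_h hDf hu S.hα) hint1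
      intro t ht
      exact hpt t ⟨lt_of_lt_of_le hu.1 ht.1, ht.2⟩
    have hval : (∫ t in u..S.α, (C / Real.sqrt t + M'))
        = (C * (2 * Real.sqrt S.α) + M' * S.α) - (C * (2 * Real.sqrt u) + M' * u) := by
      rw [intervalIntegral.integral_eq_sub_of_hasDerivAt hderiv hint1]
    rw [hval] at hmono
    have hnn : 0 ≤ C * (2 * Real.sqrt u) + M' * u :=
      add_nonneg (by positivity) (mul_nonneg hMnn hu.1.le)
    linarith

lemma X_image_nonempty : (X S '' Ioo 0 1).Nonempty :=
  ⟨X S S.α, mem_image_of_mem _ S.hα⟩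

lemma X_image_bddBelow (hDf : F S 1 = 0) : BddBelow (X S '' Ioo 0 1) := by
  obtain ⟨K, hK⟩ := X_bddBelow hDf (S := S)
  exact ⟨-K, fun y ⟨u, hu, huy⟩ => huy ▸ hK u hu⟩

lemma x0_le (hDf : F S 1 = 0) {u : ℝ} (hu : u ∈ Ioo (0:ℝ) 1) : x0 S ≤ X S u :=
  csInf_le (X_image_bddBelow hDf) (mem_image_of_mem _ hu)

lemma x0_lt (hDf : F S 1 = 0) {u : ℝ} (hu : u ∈ Ioo (0:ℝ) 1) : x0 S < X S u := by
  have hu2 : u / 2 ∈ Ioo (0:ℝ) 1 := ⟨by linarith [hu.1], by linarith [hu.1, hu.2]⟩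
  calc x0 S ≤ X S (u / 2) := x0_le hDf hu2
    _ < X S u := (strictMonoOn_X hDf) hu2 hu (by linarith [hu.1])

/-- the key quadratic bound: `x0 + c √u ≤ X u` for all `u ∈ (0,1)` -/
lemma x0_sqrt_bound (hDf : F S 1 = 0) : ∃ c > 0, ∀ u ∈ Ioo (0:ℝ) 1,
    x0 S + c * Real.sqrt u ≤ X S u := by
  obtain ⟨c, hc, hgap⟩ := X_sqrt_gap hDf (S := S)
  refine ⟨c, hc, ?_⟩
  intro u hu
  by_contra hcon
  push_neg at hcon
  set η := (x0 S + c * Real.sqrt u - X S u) / 2 with hη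
  have hηpos : 0 < η := by simp only [hη]; linarith
  set ε := min (u / 2) ((η / c) ^ 2) with hε
  have hεpos : 0 < ε := lt_min (by linarith [hu.1]) (by positivity)
  have hεu : ε ≤ u := le_trans (min_le_left _ _) (by linarith [hu.1])
  have hεmem : ε ∈ Ioo (0:ℝ) 1 := ⟨hεpos, lt_of_le_of_lt hεu hu.2⟩
  have h1 := hgap ε u hεmem hu hεu
  have h2 := x0_le hDf hεmem
  have h3 : Real.sqrt ε ≤ η / c := by
    calc Real.sqrt ε ≤ Real.sqrt ((η / c) ^ 2) := Real.sqrt_le_sqrt (min_le_right _ _)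
      _ = η / c := Real.sqrt_sq (by positivity)
  have h4 : c * Real.sqrt ε ≤ η := by
    calc c * Real.sqrt ε ≤ c * (η / c) := mul_le_mul_of_nonneg_left h3 hc.le
      _ = η := by field_simp
  -- x0 + c√u ≤ X ε + c √u ≤ X u + c √ε ≤ X u + η
  have : x0 S + c * Real.sqrt u ≤ X S u + η := by linarith
  simp only [hη] at this
  linarith

/-- `X` is unbounded above on `(0,1)` -/
lemma X_unbounded (hDf : F S 1 = 0) : ∀ R : ℝ, ∃ u ∈ Ioo (0:ℝ) 1, R < X S u := by
  obtain ⟨m, hm, Md, hMd, hD⟩ := D_bounds (S := S)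
  obtain ⟨B, hB, hPo⟩ := P_upper_one hDf (S := S)
  intro R
  set β := S.α with hβ
  have hβ0 : 0 < β := S.hα.1
  have hβ1 : β < 1 := S.hα.2
  set c3 := m * β / B with hc3
  have hc3p : 0 < c3 := by positivity
  -- choose u close to 1
  set ε := min ((1 - β) / 2) ((1 - β) * Real.exp (-((R - X S β + 1) / c3))) with hεdef
  have hεpos : 0 < ε := lt_min (by linarith) (mul_pos (by linarith) (Real.exp_pos _))
  set u := 1 - ε with hu_def
  have hu : u ∈ Ioo (0:ℝ) 1 := by
    constructor
    · have : ε ≤ (1 - β) / 2 := min_le_left _ _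
      simp only [hu_def]; linarith
    · simp only [hu_def]; linarith
  have hβu : β ≤ u := by
    have : ε ≤ (1 - β) / 2 := min_le_left _ _
    simp only [hu_def]; linarith
  refine ⟨u, hu, ?_⟩
  -- X u - X β = ∫_β^u D/P ≥ ∫_β^u c3/(1-t) = c3 (log(1-β) - log(1-u))
  have hgap : X S u - X S β = ∫ t in β..u, S.D t / P S t := by
    have := intervalIntegral.integral_add_adjacent_intervals
      (intInt_h hDf S.hα ⟨hβ0, hβ1⟩) (intInt_h hDf ⟨hβ0, hβ1⟩ hu)
    rw [X, X]
    linarith [this]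
  have hpt : ∀ t ∈ Icc β u, c3 / (1 - t) ≤ S.D t / P S t := by
    intro t ht
    have ht' : t ∈ Ioo (0:ℝ) 1 := ⟨lt_of_lt_of_le hβ0 ht.1, lt_of_le_of_lt ht.2 hu.2⟩
    have h1t : 0 < 1 - t := by linarith [ht'.2]
    have hPt : 0 < P S t := P_pos hDf ht'
    rw [div_le_div_iff₀ h1t hPt]
    have h1 : P S t ≤ B * (1 - t) := hPo t ⟨ht'.1.le, ht'.2.le⟩
    have h2 : m * t ≤ S.D t := (hD t ⟨ht'.1.le, ht'.2.le⟩).1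
    have h3 : m * β ≤ S.D t := by
      have hβt : β ≤ t := ht.1
      nlinarith
    calc c3 * P S t ≤ c3 * (B * (1 - t)) := mul_le_mul_of_nonneg_left h1 hc3p.le
      _ = (m * β) * (1 - t) := by rw [hc3]; field_simp
      _ ≤ S.D t * (1 - t) := mul_le_mul_of_nonneg_right h3 h1t.le
  have hderiv : ∀ t ∈ uIcc β u, HasDerivAt (fun t => -(c3 * Real.log (1 - t)))
      (c3 / (1 - t)) t := by
    intro t ht
    rw [uIcc_of_le hβu] at ht
    have h1t : (0:ℝ) < 1 - t := by linarith [lt_of_le_of_lt ht.2 hu.2]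
    have hlog : HasDerivAt (fun t : ℝ => Real.log (1 - t)) (-(1 / (1 - t))) t := by
      have h1 : HasDerivAt (fun t : ℝ => 1 - t) (-1) t := by
        simpa using (hasDerivAt_id t).const_sub 1
      have : HasDerivAt (fun t : ℝ => Real.log (1 - t)) ((1 - t)⁻¹ * -1) t :=
        (Real.hasDerivAt_log h1t.ne').comp t h1
      convert this using 1
      ring
    have : HasDerivAt (fun y => -(c3 * Real.log (1 - y))) (-(c3 * -(1 / (1 - t)))) t :=
      (hlog.const_mul c3).neg
    convert this using 1
    ring
  have hint1 : IntervalIntegrable (fun t => c3 / (1 - t)) volume β u := by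
    apply ContinuousOn.intervalIntegrable
    rw [uIcc_of_le hβu]
    apply ContinuousOn.div continuousOn_const (by fun_prop)
    intro t ht
    have : t < 1 := lt_of_le_of_lt ht.2 hu.2
    intro hcon; linarith [sub_eq_zero.mp hcon]
  have hmono : (∫ t in β..u, c3 / (1 - t)) ≤ ∫ t in β..u, S.D t / P S t :=
    intervalIntegral.integral_mono_on hβu hint1 (intInt_h hDf ⟨hβ0, hβ1⟩ hu) hpt
  have hval : (∫ t in β..u, c3 / (1 - t))
      = -(c3 * Real.log (1 - u)) - -(c3 * Real.log (1 - β)) := by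
    rw [intervalIntegral.integral_eq_sub_of_hasDerivAt hderiv hint1]
  -- now: log(1-u) = log ε ≤ log((1-β)exp(-((R - Xβ + 1)/c3)))
  have h1u : 1 - u = ε := by simp [hu_def]
  have hεle : ε ≤ (1 - β) * Real.exp (-((R - X S β + 1) / c3)) := min_le_right _ _
  have hlogle : Real.log ε ≤ Real.log (1 - β) + (-((R - X S β + 1) / c3)) := by
    calc Real.log ε ≤ Real.log ((1 - β) * Real.exp (-((R - X S β + 1) / c3))) :=
          Real.log_le_log hεpos hεle
      _ = Real.log (1 - β) + (-((R - X S β + 1) / c3)) := by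
          rw [Real.log_mul (by linarith) (Real.exp_ne_zero _), Real.log_exp]
  have hloglt : Real.log (1 - β) ≤ 0 := Real.log_nonpos (by linarith) (by linarith)
  have key : c3 * (Real.log (1 - β) - Real.log ε) ≥ R - X S β + 1 := by
    have h5 : Real.log (1 - β) - Real.log ε ≥ (R - X S β + 1) / c3 := by linarith
    calc c3 * (Real.log (1 - β) - Real.log ε) ≥ c3 * ((R - X S β + 1) / c3) :=
          mul_le_mul_of_nonneg_left h5 hc3p.le
      _ = R - X S β + 1 := by field_simp
  rw [hval] at hmono
  rw [h1u] at hmono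
  have : X S u - X S β ≥ c3 * (Real.log (1 - β) - Real.log ε) := by
    rw [hgap]
    calc c3 * (Real.log (1 - β) - Real.log ε)
        = -(c3 * Real.log ε) - -(c3 * Real.log (1 - β)) := by ring
      _ ≤ ∫ t in β..u, S.D t / P S t := hmono
  linarith

/-- surjectivity of `X` onto `(x0, ∞)` -/
lemma X_surj (hDf : F S 1 = 0) {x : ℝ} (hx : x0 S < x) :
    ∃ u ∈ Ioo (0:ℝ) 1, X S u = x := by
  -- first find a with X a < x
  have ha : ∃ a ∈ Ioo (0:ℝ) 1, X S a < x := by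
    by_contra hcon
    push_neg at hcon
    have : x ≤ x0 S := le_csInf (X_image_nonempty (S := S)) (by
      rintro y ⟨u, hu, rfl⟩; exact hcon u hu)
    linarith
  obtain ⟨a, ha, hax⟩ := ha
  obtain ⟨b, hb, hbx⟩ := X_unbounded hDf x
  have hab : a < b := by
    by_contra hcon
    push_neg at hcon
    have := (strictMonoOn_X hDf).monotoneOn hb ha hcon
    linarith
  have hIcc : Icc a b ⊆ Ioo (0:ℝ) 1 := fun t ht => ⟨lt_of_lt_of_le ha.1 ht.1,
    lt_of_le_of_lt ht.2 hb.2⟩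
  have hcont : ContinuousOn (X S) (Icc a b) := fun t ht =>
    (hasDerivAt_X hDf (hIcc ht)).continuousAt.continuousWithinAt
  have hmem : x ∈ Icc (X S a) (X S b) := ⟨hax.le, hbx.le⟩
  obtain ⟨u, hu, hXu⟩ := intermediate_value_Icc hab.le hcont hmem
  exact ⟨u, hIcc hu, hXu⟩

open Classical in
def phi (S : NagumoSetup) : ℝ → ℝ :=
  fun x => if h : ∃ u ∈ Ioo (0:ℝ) 1, X S u = x then h.choose else 0

def rho (S : NagumoSetup) : ℝ → ℝ := fun x => P S (phi S x) / S.D (phi S x)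

lemma phi_spec (hDf : F S 1 = 0) {x : ℝ} (hx : x0 S < x) :
    phi S x ∈ Ioo (0:ℝ) 1 ∧ X S (phi S x) = x := by
  have h : ∃ u ∈ Ioo (0:ℝ) 1, X S u = x := X_surj hDf hx
  simp only [phi, dif_pos h]
  exact ⟨h.choose_spec.1, h.choose_spec.2⟩

lemma phi_zero (hDf : F S 1 = 0) {x : ℝ} (hx : x ≤ x0 S) : phi S x = 0 := by
  rw [phi, dif_neg]
  rintro ⟨u, hu, hXu⟩
  have := x0_lt hDf hu
  linarith [hXu ▸ this]

lemma phi_mem (hDf : F S 1 = 0) (x : ℝ) : phi S x ∈ Icc (0:ℝ) 1 := by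
  rcases le_or_gt x (x0 S) with h | h
  · rw [phi_zero hDf h]; exact ⟨le_refl _, zero_le_one⟩
  · have := (phi_spec hDf h).1
    exact ⟨this.1.le, this.2.le⟩

lemma phi_X (hDf : F S 1 = 0) {u : ℝ} (hu : u ∈ Ioo (0:ℝ) 1) : phi S (X S u) = u := by
  have hx : x0 S < X S u := x0_lt hDf hu
  obtain ⟨hmem, hXeq⟩ := phi_spec hDf hx
  exact (strictMonoOn_X hDf).injOn hmem hu hXeq

lemma phi_monotone (hDf : F S 1 = 0) : Monotone (phi S) := by
  intro x y hxy
  rcases le_or_gt x (x0 S) with hx | hx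
  · rw [phi_zero hDf hx]
    exact (phi_mem hDf y).1
  · have hy : x0 S < y := lt_of_lt_of_le hx hxy
    obtain ⟨hux, hXx⟩ := phi_spec hDf hx
    obtain ⟨huy, hXy⟩ := phi_spec hDf hy
    by_contra hcon
    push_neg at hcon
    have := (strictMonoOn_X hDf) huy hux hcon
    rw [hXx, hXy] at this
    linarith

lemma phi_sqrt_le (hDf : F S 1 = 0) : ∃ c > 0, ∀ x, x0 S < x →
    Real.sqrt (phi S x) ≤ (x - x0 S) / c := by
  obtain ⟨c, hc, hb⟩ := x0_sqrt_bound hDf (S := S)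
  refine ⟨c, hc, ?_⟩
  intro x hx
  obtain ⟨hmem, hXeq⟩ := phi_spec hDf hx
  have := hb _ hmem
  rw [hXeq] at this
  rw [le_div_iff₀ hc]
  linarith

lemma continuousAt_phi (hDf : F S 1 = 0) {x : ℝ} (hx : x0 S < x) :
    ContinuousAt (phi S) x := by
  apply continuousAt_of_monotoneOn_of_exists_between
    ((phi_monotone hDf).monotoneOn (Ioi (x0 S)))
    (Ioi_mem_nhds hx)
  · -- left
    intro b hb
    obtain ⟨hmem, hXeq⟩ := phi_spec hDf hx
    set u' := (max b 0 + phi S x) / 2 with hu'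
    have h1 : max b 0 < phi S x := max_lt hb hmem.1
    have hu'mem : u' ∈ Ioo (0:ℝ) 1 := by
      constructor
      · have : (0:ℝ) ≤ max b 0 := le_max_right _ _
        simp only [hu']; linarith [hmem.1]
      · simp only [hu']; nlinarith [hmem.2, le_max_right b 0]
    refine ⟨X S u', x0_lt hDf hu'mem, ?_⟩
    rw [phi_X hDf hu'mem]
    constructor
    · have : b ≤ max b 0 := le_max_left _ _
      simp only [hu']; linarith
    · simp only [hu']; linarith
  · -- right
    intro b hb
    obtain ⟨hmem, hXeq⟩ := phi_spec hDf hx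
    set u' := (phi S x + min b 1) / 2 with hu'
    have h1 : phi S x < min b 1 := lt_min hb hmem.2
    have hu'mem : u' ∈ Ioo (0:ℝ) 1 := by
      constructor
      · simp only [hu']; linarith [hmem.1]
      · have : min b 1 ≤ 1 := min_le_right _ _
        simp only [hu']; linarith
    refine ⟨X S u', x0_lt hDf hu'mem, ?_⟩
    rw [phi_X hDf hu'mem]
    constructor
    · simp only [hu']; linarith
    · have : min b 1 ≤ b := min_le_left _ _
      simp only [hu']; linarith

lemma hasDerivAt_phi_pos (hDf : F S 1 = 0) {x : ℝ} (hx : x0 S < x) :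
    HasDerivAt (phi S) (rho S x) x := by
  obtain ⟨hmem, hXeq⟩ := phi_spec hDf hx
  have hD0 : S.D (phi S x) ≠ 0 := (S.hD_pos _ ⟨hmem.1, hmem.2.le⟩).ne'
  have hP0 : P S (phi S x) ≠ 0 := (P_pos hDf hmem).ne'
  have hfx : HasDerivAt (X S) (S.D (phi S x) / P S (phi S x)) (phi S x) :=
    hasDerivAt_X hDf hmem
  have hne : S.D (phi S x) / P S (phi S x) ≠ 0 := (h_pos hDf hmem).ne'
  have hinv : HasDerivAt (phi S) ((S.D (phi S x) / P S (phi S x))⁻¹) x := by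
    apply HasDerivAt.of_local_left_inverse (continuousAt_phi hDf hx) hfx hne
    filter_upwards [Ioi_mem_nhds hx] with y hy
    exact (phi_spec hDf hy).2
  rw [inv_div] at hinv
  exact hinv

lemma hasDerivAt_phi_x0 (hDf : F S 1 = 0) : HasDerivAt (phi S) 0 (x0 S) := by
  obtain ⟨c, hc, hsq⟩ := phi_sqrt_le hDf (S := S)
  rw [hasDerivAt_iff_tendsto_slope]
  refine squeeze_zero_norm (a := fun y => |y - x0 S| / c ^ 2) ?_ ?_
  · intro y
    rw [Real.norm_eq_abs, slope_def_field, phi_zero hDf (le_refl _), sub_zero]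
    rcases lt_trichotomy y (x0 S) with h | h | h
    · rw [phi_zero hDf h.le]
      simp only [zero_div, abs_zero]
      positivity
    · subst h
      simp only [sub_self, div_zero, abs_zero]
      positivity
    · have hy0 : 0 < y - x0 S := by linarith
      have hφnn : 0 ≤ phi S y := (phi_mem hDf y).1
      have h1 : phi S y ≤ ((y - x0 S) / c) ^ 2 := by
        have h2 := hsq y h
        calc phi S y = Real.sqrt (phi S y) ^ 2 := (Real.sq_sqrt hφnn).symm
          _ ≤ ((y - x0 S) / c) ^ 2 := by
              apply pow_le_pow_left₀ (Real.sqrt_nonneg _) h2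
      rw [abs_of_nonneg (div_nonneg hφnn hy0.le)]
      rw [div_le_div_iff₀ hy0 (by positivity), abs_of_pos hy0]
      calc phi S y * c ^ 2 ≤ ((y - x0 S) / c) ^ 2 * c ^ 2 := by
            apply mul_le_mul_of_nonneg_right h1 (by positivity)
        _ = (y - x0 S) * (y - x0 S) := by field_simp
  · have : Tendsto (fun y => |y - x0 S| / c ^ 2) (𝓝 (x0 S)) (𝓝 (|x0 S - x0 S| / c ^ 2)) := by
      apply Tendsto.div_const
      exact ((continuous_id.sub continuous_const).abs).tendsto _
    simp only [sub_self, abs_zero, zero_div] at this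
    exact this.mono_left nhdsWithin_le_nhds

lemma hasDerivAt_phi_neg (hDf : F S 1 = 0) {x : ℝ} (hx : x < x0 S) :
    HasDerivAt (phi S) 0 x := by
  have hev : phi S =ᶠ[𝓝 x] fun _ => 0 := by
    filter_upwards [Iio_mem_nhds hx] with y hy
    exact phi_zero hDf hy.le
  exact (hasDerivAt_const x 0).congr_of_eventuallyEq hev

lemma rho_zero (hDf : F S 1 = 0) {x : ℝ} (hx : x ≤ x0 S) : rho S x = 0 := by
  rw [rho, phi_zero hDf hx, P_zero]
  exact zero_div _

lemma hasDerivAt_phi_all (hDf : F S 1 = 0) (x : ℝ) :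
    HasDerivAt (phi S) (rho S x) x := by
  rcases lt_trichotomy x (x0 S) with h | h | h
  · rw [rho_zero hDf h.le]
    exact hasDerivAt_phi_neg hDf h
  · rw [h, rho_zero hDf (le_refl _)]
    exact hasDerivAt_phi_x0 hDf
  · exact hasDerivAt_phi_pos hDf h

lemma deriv_phi (hDf : F S 1 = 0) : deriv (phi S) = rho S :=
  funext fun x => (hasDerivAt_phi_all hDf x).deriv

lemma rho_bound (hDf : F S 1 = 0) : ∃ K > 0, ∀ x, x0 S < x →
    rho S x ≤ K * (x - x0 S) ∧ 0 ≤ rho S x := by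
  obtain ⟨m, hm, Md, hMd, hD⟩ := D_bounds (S := S)
  obtain ⟨B, hB, hP⟩ := P_upper (S := S)
  obtain ⟨c, hc, hsq⟩ := phi_sqrt_le hDf (S := S)
  refine ⟨B / m / c, by positivity, ?_⟩
  intro x hx
  obtain ⟨hmem, hXeq⟩ := phi_spec hDf hx
  set u := phi S x with hu
  have hDu : 0 < S.D u := S.hD_pos u ⟨hmem.1, hmem.2.le⟩
  have hrnn : 0 ≤ rho S x := div_nonneg (P_nonneg _) hDu.le
  refine ⟨?_, hrnn⟩
  have h1 : P S u ≤ B * (u * Real.sqrt u) := hP u ⟨hmem.1.le, hmem.2.le⟩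
  have h2 : m * u ≤ S.D u := (hD u ⟨hmem.1.le, hmem.2.le⟩).1
  have h3 : rho S x ≤ (B * (u * Real.sqrt u)) / (m * u) := by
    rw [rho, ← hu]
    exact div_le_div₀ (mul_nonneg hB.le (mul_nonneg hmem.1.le (Real.sqrt_nonneg _))) h1 (mul_pos hm hmem.1) h2
  have h4 : (B * (u * Real.sqrt u)) / (m * u) = B / m * Real.sqrt u := by
    field_simp [hmem.1.ne']
  have h5 : Real.sqrt u ≤ (x - x0 S) / c := hsq x hx
  calc rho S x ≤ B / m * Real.sqrt u := by rw [← h4]; exact h3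
    _ ≤ B / m * ((x - x0 S) / c) := mul_le_mul_of_nonneg_left h5 (by positivity)
    _ = B / m / c * (x - x0 S) := by ring

lemma continuous_rho (hDf : F S 1 = 0) : Continuous (rho S) := by
  rw [continuous_iff_continuousAt]
  intro x
  rcases lt_trichotomy x (x0 S) with h | h | h
  · apply ContinuousAt.congr (continuousAt_const (y := (0:ℝ)))
    filter_upwards [Iio_mem_nhds h] with y hy
    exact (rho_zero hDf hy.le).symm
  · -- continuity at x0 via squeeze
    obtain ⟨K, hK, hb⟩ := rho_bound hDf (S := S)
    have h0 : rho S (x0 S) = 0 := rho_zero hDf (le_refl _)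
    unfold ContinuousAt
    rw [h, h0]
    refine squeeze_zero_norm (a := fun y => K * |y - x0 S|) ?_ ?_
    · intro y
      rcases le_or_gt y (x0 S) with hy | hy
      · rw [rho_zero hDf hy]
        simp only [norm_zero]
        positivity
      · obtain ⟨h1, h2⟩ := hb y hy
        rw [Real.norm_eq_abs, abs_of_nonneg h2]
        calc rho S y ≤ K * (y - x0 S) := h1
          _ = K * |y - x0 S| := by rw [abs_of_pos (by linarith)]
    · have : Tendsto (fun y => K * |y - x0 S|) (𝓝 (x0 S)) (𝓝 (K * |x0 S - x0 S|)) :=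
        (continuous_const.mul ((continuous_id.sub continuous_const).abs)).tendsto _
      simpa using this
  · -- x > x0
    obtain ⟨hmem, hXeq⟩ := phi_spec hDf h
    have hcφ : ContinuousAt (phi S) x := continuousAt_phi hDf h
    apply ContinuousAt.div
    · exact (contP S).continuousAt.comp hcφ
    · exact (contD S).continuousAt.comp hcφ
    · exact (S.hD_pos _ ⟨hmem.1, hmem.2.le⟩).ne'

lemma contDiff_phi (hDf : F S 1 = 0) : ContDiff ℝ 1 (phi S) := by
  rw [contDiff_one_iff_deriv]
  refine ⟨fun x => (hasDerivAt_phi_all hDf x).differentiableAt, ?_⟩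
  rw [deriv_phi hDf]
  exact continuous_rho hDf

lemma w_eq (hDf : F S 1 = 0) :
    (fun y => S.D (phi S y) * deriv (phi S) y) = fun y => P S (phi S y) := by
  funext y
  rw [deriv_phi hDf]
  rcases le_or_gt y (x0 S) with h | h
  · rw [rho_zero hDf h, phi_zero hDf h, P_zero, mul_zero]
  · obtain ⟨hmem, hXeq⟩ := phi_spec hDf h
    rw [rho]
    field_simp [(S.hD_pos _ ⟨hmem.1, hmem.2.le⟩).ne']

lemma hasDerivAt_w (hDf : F S 1 = 0) (x : ℝ) :
    HasDerivAt (fun y => P S (phi S y)) (-(S.f (phi S x))) x := by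
  rcases lt_trichotomy x (x0 S) with h | h | h
  · have hev : (fun y => P S (phi S y)) =ᶠ[𝓝 x] fun _ => 0 := by
      filter_upwards [Iio_mem_nhds h] with y hy
      rw [phi_zero hDf hy.le, P_zero]
    rw [phi_zero hDf h.le, S.hf0, neg_zero]
    exact (hasDerivAt_const x 0).congr_of_eventuallyEq hev
  · -- x = x0
    subst h
    rw [phi_zero hDf (le_refl _), S.hf0, neg_zero]
    obtain ⟨B, hB, hP⟩ := P_upper (S := S)
    obtain ⟨c, hc, hsq⟩ := phi_sqrt_le hDf (S := S)
    rw [hasDerivAt_iff_tendsto_slope]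
    refine squeeze_zero_norm (a := fun y => B / c ^ 3 * (y - x0 S) ^ 2) ?_ ?_
    · intro y
      rw [Real.norm_eq_abs, slope_def_field, phi_zero hDf (le_refl _), P_zero, sub_zero]
      rcases lt_trichotomy y (x0 S) with hy | hy | hy
      · rw [phi_zero hDf hy.le, P_zero]
        simp only [zero_div, abs_zero]
        positivity
      · subst hy
        simp only [sub_self, div_zero, abs_zero]
        positivity
      · have hy0 : 0 < y - x0 S := by linarith
        have hmem := (phi_spec hDf hy).1
        set u := phi S y with hu
        have hsqy : Real.sqrt u ≤ (y - x0 S) / c := hsq y hy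
        have hule : u ≤ ((y - x0 S) / c) ^ 2 := by
          calc u = Real.sqrt u ^ 2 := (Real.sq_sqrt hmem.1.le).symm
            _ ≤ ((y - x0 S) / c) ^ 2 := pow_le_pow_left₀ (Real.sqrt_nonneg _) hsqy 2
        have hP1 : P S u ≤ B * (u * Real.sqrt u) := hP u ⟨hmem.1.le, hmem.2.le⟩
        have hP2 : P S u ≤ B * (((y - x0 S) / c) ^ 2 * ((y - x0 S) / c)) := by
          apply le_trans hP1
          apply mul_le_mul_of_nonneg_left _ hB.le
          apply mul_le_mul hule hsqy (Real.sqrt_nonneg _) (by positivity)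
        rw [abs_of_nonneg (div_nonneg (P_nonneg _) hy0.le)]
        rw [div_le_iff₀ hy0]
        calc P S u ≤ B * (((y - x0 S) / c) ^ 2 * ((y - x0 S) / c)) := hP2
          _ = B / c ^ 3 * (y - x0 S) ^ 2 * (y - x0 S) := by field_simp
    · have : Tendsto (fun y => B / c ^ 3 * (y - x0 S) ^ 2) (𝓝 (x0 S))
          (𝓝 (B / c ^ 3 * (x0 S - x0 S) ^ 2)) := by
        apply Tendsto.const_mul
        exact ((continuous_id.sub continuous_const).pow 2).tendsto _
      simp only [sub_self] at this
      norm_num at this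
      exact this.mono_left nhdsWithin_le_nhds
  · -- x > x0
    obtain ⟨hmem, hXeq⟩ := phi_spec hDf h
    set u := phi S x with hu
    have hQu : 0 < Q S u := Q_pos hDf hmem
    have hPu : 0 < P S u := P_pos hDf hmem
    have hDu : 0 < S.D u := S.hD_pos u ⟨hmem.1, hmem.2.le⟩
    have hQ' : HasDerivAt (Q S) (-2 * g S u) u := by
      have := (hasDerivAt_F S u).const_mul (-2 : ℝ)
      exact this
    have hPder : HasDerivAt (P S) (1 / (2 * Real.sqrt (Q S u)) * (-2 * g S u)) u :=
      (Real.hasDerivAt_sqrt hQu.ne').comp u hQ'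
    have hcomp : HasDerivAt (fun y => P S (phi S y)) (1 / (2 * Real.sqrt (Q S u)) * (-2 * g S u) * rho S x) x :=
      HasDerivAt.comp (h₂ := P S) (h := phi S) x hPder (hasDerivAt_phi_all hDf x)
    convert hcomp using 1
    rw [rho, ← hu]
    rw [show P S u = Real.sqrt (Q S u) from rfl] at hPu ⊢
    rw [g]
    field_simp

/-- first front: the increasing one -/
lemma front1 (S : NagumoSetup) (hDf : (∫ u in (0:ℝ)..1, S.D u * S.f u) = 0) :
    ∃ φ : ℝ → ℝ, ContDiff ℝ 1 φ ∧ (∀ x, φ x ∈ Set.Icc (0:ℝ) 1) ∧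
      Differentiable ℝ (fun x => S.D (φ x) * deriv φ x) ∧
      (∀ x, deriv (fun y => S.D (φ y) * deriv φ y) x + S.f (φ x) = 0) ∧
      Monotone φ ∧ Tendsto φ atBot (𝓝 0) ∧ Tendsto φ atTop (𝓝 1) := by
  have hDf' : F S 1 = 0 := hDf
  refine ⟨phi S, contDiff_phi hDf', phi_mem hDf', ?_, ?_, phi_monotone hDf', ?_, ?_⟩
  · rw [w_eq hDf']
    exact fun x => (hasDerivAt_w hDf' x).differentiableAt
  · intro x
    rw [w_eq hDf', (hasDerivAt_w hDf' x).deriv]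
    ring
  · apply Tendsto.congr' _ (tendsto_const_nhds (α := ℝ) (x := (0:ℝ)))
    filter_upwards [eventually_le_atBot (x0 S)] with y hy
    exact (phi_zero hDf' hy).symm
  · rw [tendsto_order]
    constructor
    · intro b hb
      set u' := (max b 0 + 1) / 2 with hu'
      have hu'mem : u' ∈ Ioo (0:ℝ) 1 := by
        constructor
        · have : (0:ℝ) ≤ max b 0 := le_max_right _ _
          simp only [hu']; linarith
        · have : max b 0 < 1 := max_lt hb one_pos
          simp only [hu']; linarith
      have hbu' : b < u' := by
        have h1 : b ≤ max b 0 := le_max_left _ _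
        have h2 : max b 0 < 1 := max_lt hb one_pos
        simp only [hu']; linarith
      filter_upwards [eventually_gt_atTop (X S u')] with y hy
      have hyx0 : x0 S < y := lt_trans (x0_lt hDf' hu'mem) hy
      obtain ⟨hmem, hXeq⟩ := phi_spec hDf' hyx0
      have : u' < phi S y := by
        by_contra hcon
        push_neg at hcon
        have := (strictMonoOn_X hDf').monotoneOn hmem hu'mem hcon
        rw [hXeq] at this
        linarith
      linarith
    · intro b hb
      filter_upwards with y
      exact lt_of_le_of_lt (phi_mem hDf' y).2 hb

/-- reflection: from an increasing front get a decreasing one -/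
lemma reflect (S : NagumoSetup)
    (h : ∃ φ : ℝ → ℝ, ContDiff ℝ 1 φ ∧ (∀ x, φ x ∈ Set.Icc (0:ℝ) 1) ∧
      Differentiable ℝ (fun x => S.D (φ x) * deriv φ x) ∧
      (∀ x, deriv (fun y => S.D (φ y) * deriv φ y) x + S.f (φ x) = 0) ∧
      Monotone φ ∧ Tendsto φ atBot (𝓝 0) ∧ Tendsto φ atTop (𝓝 1)) :
    ∃ φ : ℝ → ℝ, ContDiff ℝ 1 φ ∧ (∀ x, φ x ∈ Set.Icc (0:ℝ) 1) ∧
      Differentiable ℝ (fun x => S.D (φ x) * deriv φ x) ∧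
      (∀ x, deriv (fun y => S.D (φ y) * deriv φ y) x + S.f (φ x) = 0) ∧
      Antitone φ ∧ Tendsto φ atBot (𝓝 1) ∧ Tendsto φ atTop (𝓝 0) := by
  obtain ⟨φ, hC, hmem, hdiffW, heq, hmono, hbot, htop⟩ := h
  set W := fun y => S.D (φ y) * deriv φ y with hW
  set ψ := fun x => φ (-x) with hψ
  have hφd : Differentiable ℝ φ := hC.differentiable one_ne_zero
  have hψderiv : ∀ x, deriv ψ x = -(deriv φ (-x)) := by
    intro x
    have h1 : HasDerivAt ψ (deriv φ (-x) * (-1)) x :=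
      ((hφd (-x)).hasDerivAt).comp x (hasDerivAt_neg x)
    rw [h1.deriv]; ring
  have hWψ : (fun y => S.D (ψ y) * deriv ψ y) = fun y => -(W (-y)) := by
    funext y
    rw [hψderiv y]
    simp only [hψ, hW]
    ring
  refine ⟨ψ, hC.comp (contDiff_id.neg), fun x => hmem (-x), ?_, ?_, ?_, ?_, ?_⟩
  · rw [hWψ]
    exact (hdiffW.comp (differentiable_id.neg)).neg
  · intro x
    have h2 : HasDerivAt W (deriv W (-x)) (-x) := (hdiffW (-x)).hasDerivAt
    have h3 : HasDerivAt (fun y => -(W (-y))) (deriv W (-x)) x := by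
      have : HasDerivAt (fun y => -W (-y)) (-(deriv W (-x) * -1)) x :=
        (h2.comp x (hasDerivAt_neg x)).neg
      convert this using 1
      ring
    rw [hWψ, h3.deriv]
    have := heq (-x)
    simpa using this
  · intro x y hxy
    exact hmono (neg_le_neg hxy)
  · exact htop.comp tendsto_neg_atBot_atTop
  · exact hbot.comp tendsto_neg_atTop_atBot

end Nag

end NagAux

/-- If `∫₀¹ D f = 0` then there exist two stationary (`c = 0`) monotone fronts:
a nondecreasing one from `0` to `1` and a nonincreasing one from `1` to `0`. -/
theorem statement1 (S : NagumoSetup)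
    (hDf : (∫ u in (0:ℝ)..1, S.D u * S.f u) = 0) :
    (∃ φ : ℝ → ℝ, ContDiff ℝ 1 φ ∧ (∀ x, φ x ∈ Set.Icc (0:ℝ) 1) ∧
      Differentiable ℝ (fun x => S.D (φ x) * deriv φ x) ∧
      (∀ x, deriv (fun y => S.D (φ y) * deriv φ y) x + S.f (φ x) = 0) ∧
      Monotone φ ∧ Tendsto φ atBot (𝓝 0) ∧ Tendsto φ atTop (𝓝 1)) ∧
    (∃ φ : ℝ → ℝ, ContDiff ℝ 1 φ ∧ (∀ x, φ x ∈ Set.Icc (0:ℝ) 1) ∧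
      Differentiable ℝ (fun x => S.D (φ x) * deriv φ x) ∧
      (∀ x, deriv (fun y => S.D (φ y) * deriv φ y) x + S.f (φ x) = 0) ∧
      Antitone φ ∧ Tendsto φ atBot (𝓝 1) ∧ Tendsto φ atTop (𝓝 0)) :=
  ⟨Nag.front1 S hDf, Nag.reflect S (Nag.front1 S hDf)⟩
end
end

section
/- If for some speed c ∈ ℝ the equation u_t = (D(u)u_x)_x + f(u) admits both a monotone nondecreasing traveling front profile connecting 0 (at ξ = −∞) to 1 (at ξ = +∞) and a monotone nonincreasing traveling front profile connecting 1 (at ξ = −∞) to 0 (at ξ = +∞), each a C¹ solution of (D(φ)φ')' + cφ' + f(φ) = 0 with 0 ≤ φ ≤ 1, D(φ)φ' → 0 at ±∞ and ∫_ℝ D(φ)φ'² dξ finite and positive, then necessarily c = 0. -/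
open MeasureTheory Filter Topology Asymptotics

noncomputable section

lemma tw_energy (S : NagumoSetup) (φ : ℝ → ℝ) (c a b : ℝ) (h : TWProfile S φ c)
    (hb : Tendsto φ atBot (𝓝 a)) (ht : Tendsto φ atTop (𝓝 b)) :
    -c * ∫ x, S.D (φ x) * (deriv φ x) ^ 2
      = (∫ t in (0:ℝ)..b, S.D t * S.f t) - ∫ t in (0:ℝ)..a, S.D t * S.f t := by
  set ψ : ℝ → ℝ := fun x => S.D (φ x) * deriv φ x with hψdef
  have hDf : Continuous fun u => S.D u * S.f u :=
    (S.hD_C2.continuous).mul (S.hf_C2.continuous)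
  set F : ℝ → ℝ := fun u => ∫ t in (0:ℝ)..u, S.D t * S.f t with hFdef
  have hF : ∀ u : ℝ, HasDerivAt F (S.D u * S.f u) u := by
    intro u
    exact intervalIntegral.integral_hasDerivAt_right
      (hDf.intervalIntegrable 0 u) (hDf.stronglyMeasurableAtFilter _ _) hDf.continuousAt
  have hφ' : ∀ x, HasDerivAt φ (deriv φ x) x := fun x =>
    ((h.hC1.differentiable one_ne_zero) x).hasDerivAt
  have hψ' : ∀ x, HasDerivAt ψ (-(c * deriv φ x) - S.f (φ x)) x := by
    intro x
    have := (h.hflux x).hasDerivAt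
    have he : deriv (fun y => S.D (φ y) * deriv φ y) x = -(c * deriv φ x) - S.f (φ x) := by
      have := h.hode x; linarith
    rw [he] at this; exact this
  set G : ℝ → ℝ := fun x => ψ x * ψ x / 2 + F (φ x) with hGdef
  have hG : ∀ x, HasDerivAt G (-(c * (S.D (φ x) * (deriv φ x) ^ 2))) x := by
    intro x
    have h1 : HasDerivAt (fun x => ψ x * ψ x / 2)
        ((((-(c * deriv φ x) - S.f (φ x)) * ψ x) + ψ x * (-(c * deriv φ x) - S.f (φ x))) / 2) x :=
      ((hψ' x).mul (hψ' x)).div_const 2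
    have h2 : HasDerivAt (fun x => F (φ x)) (S.D (φ x) * S.f (φ x) * deriv φ x) x :=
      (hF (φ x)).comp x (hφ' x)
    have h3 := h1.add h2
    refine HasDerivAt.congr_deriv h3 ?_
    simp only [hψdef]; ring
  have hg_int : Integrable fun x => -(c * (S.D (φ x) * (deriv φ x) ^ 2)) :=
    ((h.hint.const_mul c).neg).congr (by filter_upwards with x; simp only [Pi.neg_apply])
  -- FTC on symmetric intervals
  have hftc : ∀ r : ℝ, (∫ x in (-r)..r, -(c * (S.D (φ x) * (deriv φ x) ^ 2))) = G r - G (-r) := by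
    intro r
    exact intervalIntegral.integral_eq_sub_of_hasDerivAt (fun x _ => hG x)
      hg_int.intervalIntegrable
  have hlim1 : Tendsto (fun r : ℝ => ∫ x in (-r)..r, -(c * (S.D (φ x) * (deriv φ x) ^ 2)))
      atTop (𝓝 (∫ x, -(c * (S.D (φ x) * (deriv φ x) ^ 2)))) :=
    intervalIntegral_tendsto_integral hg_int tendsto_neg_atTop_atBot tendsto_id
  have hGtop : Tendsto G atTop (𝓝 (F b)) := by
    have hψtop : Tendsto ψ atTop (𝓝 0) := h.hflux_top
    have h1 : Tendsto (fun x => ψ x * ψ x / 2) atTop (𝓝 0) := by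
      have := (hψtop.mul hψtop).div_const 2
      simpa using this
    have h2 : Tendsto (fun x => F (φ x)) atTop (𝓝 (F b)) :=
      ((hF b).continuousAt.tendsto).comp ht
    simpa using h1.add h2
  have hGbot : Tendsto G atBot (𝓝 (F a)) := by
    have hψbot : Tendsto ψ atBot (𝓝 0) := h.hflux_bot
    have h1 : Tendsto (fun x => ψ x * ψ x / 2) atBot (𝓝 0) := by
      have := (hψbot.mul hψbot).div_const 2
      simpa using this
    have h2 : Tendsto (fun x => F (φ x)) atBot (𝓝 (F a)) :=
      ((hF a).continuousAt.tendsto).comp hb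
    simpa using h1.add h2
  have hlim2 : Tendsto (fun r : ℝ => G r - G (-r)) atTop (𝓝 (F b - F a)) :=
    (hGtop.comp tendsto_id).sub (hGbot.comp tendsto_neg_atTop_atBot)
  have heq : (∫ x, -(c * (S.D (φ x) * (deriv φ x) ^ 2))) = F b - F a := by
    have : Tendsto (fun r : ℝ => ∫ x in (-r)..r, -(c * (S.D (φ x) * (deriv φ x) ^ 2)))
        atTop (𝓝 (F b - F a)) := by
      simpa only [hftc] using hlim2
    exact tendsto_nhds_unique hlim1 this
  have hscale : (∫ x, -(c * (S.D (φ x) * (deriv φ x) ^ 2)))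
      = -c * ∫ x, S.D (φ x) * (deriv φ x) ^ 2 := by
    simp_rw [show ∀ x : ℝ, -(c * (S.D (φ x) * (deriv φ x) ^ 2))
        = (-c) * (S.D (φ x) * (deriv φ x) ^ 2) from fun x => by ring]
    exact integral_const_mul _ _
  rw [hscale] at heq
  exact heq

/-- If for some speed `c` there are both a nondecreasing front from `0` to `1` and a
nonincreasing front from `1` to `0`, then `c = 0`. -/
theorem statement3 (S : NagumoSetup) (c : ℝ) (φ₁ φ₂ : ℝ → ℝ)
    (h1 : TWProfile S φ₁ c) (h1m : Monotone φ₁)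
    (h1b : Tendsto φ₁ atBot (𝓝 0)) (h1t : Tendsto φ₁ atTop (𝓝 1))
    (h1p : 0 < ∫ x, S.D (φ₁ x) * (deriv φ₁ x) ^ 2)
    (h2 : TWProfile S φ₂ c) (h2m : Antitone φ₂)
    (h2b : Tendsto φ₂ atBot (𝓝 1)) (h2t : Tendsto φ₂ atTop (𝓝 0))
    (h2p : 0 < ∫ x, S.D (φ₂ x) * (deriv φ₂ x) ^ 2) :
    c = 0 := by
  have e1 := tw_energy S φ₁ c 0 1 h1 h1b h1t
  have e2 := tw_energy S φ₂ c 1 0 h2 h2b h2t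
  nlinarith [h1p, h2p, mul_pos h1p h2p]
end
end

section
/- Assume ∫_0^1 D(u)f(u) du = 0. Then there exists a unique ω₀ ∈ ℝ such that the stationary Nagumo front φ (the nonincreasing C¹ solution of (D(φ)φ_x)_x + f(φ) = 0 on ℝ with lim_{x→−∞} φ(x) = 1 and lim_{x→+∞} φ(x) = 0) satisfies φ(x) ≡ 0 for all x ∈ [ω₀, ∞), φ_x(x) < 0 for all x ∈ (−∞, ω₀), and 0 ≤ φ(x) < 1 for all x ∈ ℝ. -/
open MeasureTheory Filter Topology Asymptotics

noncomputable section

/-- The stationary (speed `c = 0`) Nagumo front: a nonincreasing `C¹` solution of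
`(D(φ)φ_x)_x + f(φ) = 0` on `ℝ` with `φ(-∞) = 1` and `φ(+∞) = 0`. -/
structure StatFront (S : NagumoSetup) (φ : ℝ → ℝ) : Prop where
  hC1 : ContDiff ℝ 1 φ
  hflux : Differentiable ℝ fun x => S.D (φ x) * deriv φ x
  hode : ∀ x, deriv (fun y => S.D (φ y) * deriv φ y) x + S.f (φ x) = 0
  hmono : Antitone φ
  hbot : Tendsto φ atBot (𝓝 1)
  htop : Tendsto φ atTop (𝓝 0)

/-- Helper: a function whose derivative is nonpositive on the interior of `[a,b]`
is antitone there. -/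
theorem aux_anti {G G' : ℝ → ℝ} {a b : ℝ}
    (hd : ∀ u ∈ Set.Icc a b, HasDerivAt G (G' u) u)
    (h0 : ∀ u ∈ Set.Ioo a b, G' u ≤ 0) : AntitoneOn G (Set.Icc a b) := by
  apply antitoneOn_of_deriv_nonpos (convex_Icc a b)
  · exact fun u hu => (hd u hu).continuousAt.continuousWithinAt
  · rw [interior_Icc]
    exact fun u hu =>
      ((hd u (Set.Ioo_subset_Icc_self hu)).differentiableAt).differentiableWithinAt
  · intro u hu
    rw [interior_Icc] at hu
    rw [(hd u (Set.Ioo_subset_Icc_self hu)).deriv]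
    exact h0 u hu

/-- Helper: a function whose derivative is nonnegative on the interior of `[a,b]`
is monotone there. -/
theorem aux_mono {G G' : ℝ → ℝ} {a b : ℝ}
    (hd : ∀ u ∈ Set.Icc a b, HasDerivAt G (G' u) u)
    (h0 : ∀ u ∈ Set.Ioo a b, 0 ≤ G' u) : MonotoneOn G (Set.Icc a b) := by
  apply monotoneOn_of_deriv_nonneg (convex_Icc a b)
  · exact fun u hu => (hd u hu).continuousAt.continuousWithinAt
  · rw [interior_Icc]
    exact fun u hu =>
      ((hd u (Set.Ioo_subset_Icc_self hu)).differentiableAt).differentiableWithinAt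
  · intro u hu
    rw [interior_Icc] at hu
    rw [(hd u (Set.Ioo_subset_Icc_self hu)).deriv]
    exact h0 u hu

set_option maxHeartbeats 2000000

/-- The stationary Nagumo front arrives at the degenerate state at a unique finite
point `ω₀`: `φ ≡ 0` on `[ω₀, ∞)`, `φ_x < 0` on `(-∞, ω₀)`, and `0 ≤ φ < 1` on `ℝ`. -/
theorem statement4 (S : NagumoSetup)
    (hDf : (∫ u in (0:ℝ)..1, S.D u * S.f u) = 0)
    (φ : ℝ → ℝ) (hφ : StatFront S φ) (hrange : ∀ x, 0 ≤ φ x ∧ φ x ≤ 1) :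
    ∃! ω₀ : ℝ, (∀ x, ω₀ ≤ x → φ x = 0) ∧ (∀ x, x < ω₀ → deriv φ x < 0) ∧
      (∀ x, 0 ≤ φ x ∧ φ x < 1) := by
  obtain ⟨hC1, hflux, hode, hmono, hbot, htop⟩ := hφ
  have hα0 := S.hα.1
  have hα1 := S.hα.2
  -- basic regularity
  have hDc : Continuous S.D := S.hD_C2.continuous
  have hfc : Continuous S.f := S.hf_C2.continuous
  have hD'c : Continuous (deriv S.D) := S.hD_C2.continuous_deriv one_le_two
  have hf'c : Continuous (deriv S.f) := S.hf_C2.continuous_deriv one_le_two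
  have hDdiff : Differentiable ℝ S.D := S.hD_C2.differentiable two_ne_zero
  have hfdiff : Differentiable ℝ S.f := S.hf_C2.differentiable two_ne_zero
  have hφd : Differentiable ℝ φ := hC1.differentiable one_ne_zero
  have hφc : Continuous φ := hC1.continuous
  -- the flux
  set g : ℝ → ℝ := fun x => S.D (φ x) * deriv φ x with hgdef
  have hgapp : ∀ x, g x = S.D (φ x) * deriv φ x := fun x => by rw [hgdef]
  have hgd : Differentiable ℝ g := hflux
  have hg' : ∀ x, deriv g x = -S.f (φ x) := fun x => by have := hode x; linarith
  clear_value g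
  -- deriv φ ≤ 0
  have hφ'le : ∀ x, deriv φ x ≤ 0 := by
    intro x
    have h1 : Tendsto (slope φ x) (𝓝[≠] x) (𝓝 (deriv φ x)) :=
      hasDerivAt_iff_tendsto_slope.mp (hφd x).hasDerivAt
    refine le_of_tendsto h1 ?_
    filter_upwards [self_mem_nhdsWithin] with y hy
    have hy' : y ≠ x := hy
    rw [slope_def_field]
    rcases lt_or_gt_of_ne hy' with hlt | hgt
    · have h2 : φ x ≤ φ y := hmono hlt.le
      apply div_nonpos_iff.mpr
      exact Or.inl ⟨by linarith, by linarith⟩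
    · have h2 : φ y ≤ φ x := hmono hgt.le
      apply div_nonpos_iff.mpr
      exact Or.inr ⟨by linarith, by linarith⟩
  have hDnn : ∀ u ∈ Set.Icc (0:ℝ) 1, 0 ≤ S.D u := by
    intro u hu
    rcases eq_or_lt_of_le hu.1 with h | h
    · rw [← h, S.hD0]
    · exact (S.hD_pos u ⟨h, hu.2⟩).le
  have hg0 : ∀ x, g x ≤ 0 := by
    intro x
    rw [hgapp x]
    exact mul_nonpos_iff.mpr (Or.inl ⟨hDnn _ ⟨(hrange x).1, (hrange x).2⟩, hφ'le x⟩)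
  -- the potential F
  set F : ℝ → ℝ := fun u => ∫ t in (0:ℝ)..u, S.D t * S.f t with hFdef
  have hFapp : ∀ u, F u = ∫ t in (0:ℝ)..u, S.D t * S.f t := fun u => by rw [hFdef]
  have hFint : ∀ a b : ℝ, IntervalIntegrable (fun t => S.D t * S.f t) volume a b :=
    fun a b => (hDc.mul hfc).intervalIntegrable a b
  have hFd : ∀ u, HasDerivAt F (S.D u * S.f u) u := by
    intro u
    rw [hFdef]
    exact intervalIntegral.integral_hasDerivAt_right (hFint 0 u)
      ((hDc.mul hfc).stronglyMeasurableAtFilter _ _) ((hDc.mul hfc).continuousAt)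
  have hFcont : Continuous F := by
    have : Differentiable ℝ F := fun u => (hFd u).differentiableAt
    exact this.continuous
  have hF0 : F 0 = 0 := by rw [hFapp, intervalIntegral.integral_same]
  have hF1 : F 1 = 0 := by rw [hFapp]; exact hDf
  clear_value F
  have hFneg : ∀ u ∈ Set.Ioo (0:ℝ) 1, F u < 0 := by
    intro u hu
    rcases le_or_gt u S.α with hc | hc
    · have hpos : 0 < ∫ t in (0:ℝ)..u, -(S.D t * S.f t) := by
        apply intervalIntegral.intervalIntegral_pos_of_pos_on ((hDc.mul hfc).neg.intervalIntegrable _ _) _ hu.1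
        intro t ht
        have ht1 : t < S.α := lt_of_lt_of_le ht.2 hc
        have hD := S.hD_pos t ⟨ht.1, by linarith [hu.2]⟩
        have hf := S.hf_neg t ⟨ht.1, ht1⟩
        show 0 < -(S.D t * S.f t)
        nlinarith
      rw [intervalIntegral.integral_neg] at hpos
      rw [hFapp]; linarith
    · have hadd := intervalIntegral.integral_add_adjacent_intervals
        (hFint 0 u) (hFint u 1)
      have hpos : 0 < ∫ t in u..(1:ℝ), S.D t * S.f t := by
        apply intervalIntegral.intervalIntegral_pos_of_pos_on (hFint u 1) _ hu.2
        intro t ht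
        exact mul_pos (S.hD_pos t ⟨by linarith [ht.1, hu.1, hα0], ht.2.le⟩)
          (S.hf_pos t ⟨by linarith [ht.1, hu.1], ht.2⟩)
      rw [hDf] at hadd
      rw [hFapp]; linarith
  have hFle : ∀ u ∈ Set.Icc (0:ℝ) 1, F u ≤ 0 := by
    intro u hu
    rcases eq_or_lt_of_le hu.1 with h | h
    · rw [← h, hF0]
    · rcases eq_or_lt_of_le hu.2 with h2 | h2
      · rw [h2, hF1]
      · exact (hFneg u ⟨h, h2⟩).le
  -- energy identity
  have hEd : ∀ x, HasDerivAt (fun x => g x ^ 2 / 2 + F (φ x)) 0 x := by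
    intro x
    have h1 : HasDerivAt (fun y => g y ^ 2 / 2) ((2 * g x ^ 1 * deriv g x) / 2) x :=
      (((hgd x).hasDerivAt).pow 2).div_const 2
    have h2 : HasDerivAt (fun y => F (φ y)) (S.D (φ x) * S.f (φ x) * deriv φ x) x :=
      (hFd (φ x)).comp x (hφd x).hasDerivAt
    have h3 := h1.add h2
    have h4 : (2 * g x ^ 1 * deriv g x) / 2 + S.D (φ x) * S.f (φ x) * deriv φ x = 0 := by
      rw [hg' x, hgapp x]; ring
    rw [h4] at h3
    exact h3
  have hEconst : ∀ x, g x ^ 2 / 2 + F (φ x) = g 0 ^ 2 / 2 + F (φ 0) := fun x =>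
    is_const_of_deriv_eq_zero (fun y => (hEd y).differentiableAt)
      (fun y => (hEd y).deriv) x 0
  set Ec : ℝ := g 0 ^ 2 / 2 + F (φ 0) with hEcdef
  clear_value Ec
  -- the energy constant is zero
  have hFφtop : Tendsto (fun x => F (φ x)) atTop (𝓝 0) := by
    have h1 := (hFcont.tendsto 0).comp htop
    rwa [hF0] at h1
  have hcge : 0 ≤ Ec := by
    refine le_of_tendsto hFφtop (Eventually.of_forall fun x => ?_)
    show F (φ x) ≤ Ec
    have h1 := hEconst x
    nlinarith [sq_nonneg (g x)]
  -- bounds from derivative extrema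
  obtain ⟨um, hum, humle'⟩ := isCompact_Icc.exists_isMinOn
    (Set.nonempty_Icc.mpr zero_le_one) hD'c.continuousOn
  have humle := isMinOn_iff.mp humle'
  set m := deriv S.D um with hmdef
  have hm : 0 < m := S.hD'_pos um hum
  clear_value m
  obtain ⟨uM, huM, huMge'⟩ := isCompact_Icc.exists_isMaxOn
    (Set.nonempty_Icc.mpr zero_le_one) hD'c.continuousOn
  have huMge := isMaxOn_iff.mp huMge'
  set M := deriv S.D uM with hMdef
  have hM : 0 < M := S.hD'_pos uM huM
  clear_value M
  have hDlb : ∀ t ∈ Set.Icc (0:ℝ) 1, m * t ≤ S.D t := by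
    have hmon : MonotoneOn (fun t => S.D t - m * t) (Set.Icc (0:ℝ) 1) := by
      apply aux_mono (G' := fun t => deriv S.D t - m * 1)
      · intro u _
        exact ((hDdiff u).hasDerivAt).sub ((hasDerivAt_id u).const_mul m)
      · intro u hu
        have := humle u (Set.Ioo_subset_Icc_self hu)
        simpa using this
    intro t ht
    have h1 := hmon (Set.left_mem_Icc.mpr zero_le_one) ht ht.1
    simp only [S.hD0] at h1
    linarith [h1]
  have hDub : ∀ t ∈ Set.Icc (0:ℝ) 1, S.D t ≤ M * t := by
    have hmon : MonotoneOn (fun t => M * t - S.D t) (Set.Icc (0:ℝ) 1) := by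
      apply aux_mono (G' := fun t => M * 1 - deriv S.D t)
      · intro u _
        exact ((hasDerivAt_id u).const_mul M).sub ((hDdiff u).hasDerivAt)
      · intro u hu
        have := huMge u (Set.Ioo_subset_Icc_self hu)
        simpa using this
    intro t ht
    have h1 := hmon (Set.left_mem_Icc.mpr zero_le_one) ht ht.1
    simp only [S.hD0] at h1
    linarith [h1]
  -- bound on f near 1
  obtain ⟨uL, huL, huLge'⟩ := isCompact_Icc.exists_isMaxOn
    (Set.nonempty_Icc.mpr zero_le_one) (hf'c.neg.continuousOn)
  have huLge := isMaxOn_iff.mp huLge'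
  set L := -deriv S.f uL with hLdef
  have hLge : ∀ t ∈ Set.Icc (0:ℝ) 1, -deriv S.f t ≤ L := fun t ht => huLge t ht
  have hL : 0 < L := by
    have := hLge 1 (Set.right_mem_Icc.mpr zero_le_one)
    linarith [S.hf'1]
  clear_value L
  have hfub : ∀ t ∈ Set.Icc (0:ℝ) 1, S.f t ≤ L * (1 - t) := by
    have hant : AntitoneOn (fun t => L * (1 - t) - S.f t) (Set.Icc (0:ℝ) 1) := by
      apply aux_anti (G' := fun t => L * (-1) - deriv S.f t)
      · intro u _
        exact (((hasDerivAt_id u).const_sub 1).const_mul L).sub ((hfdiff u).hasDerivAt)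
      · intro u hu
        have := hLge u (Set.Ioo_subset_Icc_self hu)
        linarith
    intro t ht
    have h1 : L * (1 - t) - S.f t ≥ L * (1 - 1) - S.f 1 :=
      hant ht (Set.right_mem_Icc.mpr zero_le_one) ht.2
    linarith [h1, S.hf1]
  -- upper bound on -F
  have hFub : ∀ u ∈ Set.Icc (0:ℝ) 1, -(2 * F u) ≤ M * L * (1 - u) ^ 2 := by
    have hant : AntitoneOn (fun u => M * L * (1 - u) ^ 2 / 2 + F u) (Set.Icc (0:ℝ) 1) := by
      apply aux_anti (G' := fun u => S.D u * S.f u - M * L * (1 - u))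
      · intro u _
        have h1 : HasDerivAt (fun y => M * L * (1 - y) ^ 2 / 2)
            (M * L * (2 * (1 - u) ^ 1 * (-1)) / 2) u :=
          ((((hasDerivAt_id u).const_sub 1).pow 2).const_mul (M * L)).div_const 2
        have h2 := h1.add (hFd u)
        have h3 : M * L * (2 * (1 - u) ^ 1 * (-1)) / 2 + S.D u * S.f u
            = S.D u * S.f u - M * L * (1 - u) := by ring
        rw [h3] at h2
        exact h2
      · intro u hu
        have hu' := Set.Ioo_subset_Icc_self hu
        rcases le_or_gt (S.f u) 0 with hf | hf
        · have h1 : 0 ≤ S.D u := hDnn u hu'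
          nlinarith [hu.2, mul_nonneg (mul_nonneg hM.le hL.le) (by linarith [hu.2] : (0:ℝ) ≤ 1 - u)]
        · have h1 : S.f u ≤ L * (1 - u) := hfub u hu'
          have h2 : S.D u ≤ M * u := hDub u hu'
          have h3 : S.D u ≤ M := by nlinarith [hu.2, hu.1]
          nlinarith [hDnn u hu']
    intro u hu
    have h1 : M * L * (1 - u) ^ 2 / 2 + F u ≥ M * L * (1 - 1) ^ 2 / 2 + F 1 :=
      hant hu (Set.right_mem_Icc.mpr zero_le_one) hu.2
    nlinarith [h1, hF1]
  -- E 0 ≤ 0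
  have hcle : Ec ≤ 0 := by
    by_contra hc
    push_neg at hc
    set sc := Real.sqrt (2 * Ec) with hscdef
    have hscpos : 0 < sc := Real.sqrt_pos.mpr (by linarith)
    clear_value sc
    have hgle : ∀ x, g x ≤ -sc := by
      intro x
      have h2 := hEconst x
      have h3 : F (φ x) ≤ 0 := hFle (φ x) ⟨(hrange x).1, (hrange x).2⟩
      have h1 : 2 * Ec ≤ g x ^ 2 := by nlinarith
      have h4 := Real.sqrt_le_sqrt h1
      rw [Real.sqrt_sq_eq_abs, abs_of_nonpos (hg0 x)] at h4
      rw [← hscdef] at h4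
      linarith [h4]
    have hφ'le2 : ∀ x, deriv φ x ≤ -(sc / M) := by
      intro x
      have h1 : S.D (φ x) ≤ M := by
        have := hDub (φ x) ⟨(hrange x).1, (hrange x).2⟩
        nlinarith [(hrange x).2, (hrange x).1]
      have h2 : S.D (φ x) * deriv φ x ≤ -sc := by rw [← hgapp x]; exact hgle x
      have h3 : M * deriv φ x ≤ S.D (φ x) * deriv φ x :=
        mul_le_mul_of_nonpos_right h1 (hφ'le x)
      have h4 : M * deriv φ x ≤ -sc := le_trans h3 h2
      rw [le_neg]
      rw [div_le_iff₀ hM]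
      linarith [h4]
    set k := sc / M with hkdef
    have hk : 0 < k := div_pos hscpos hM
    clear_value k
    set X := (φ 0 + 1) / k with hXdef
    have hX : (0:ℝ) ≤ X := div_nonneg (by linarith [(hrange 0).1]) hk.le
    clear_value X
    have hanti : AntitoneOn (fun x => φ x + k * x) (Set.Icc 0 X) := by
      apply aux_anti (G' := fun x => deriv φ x + k * 1)
      · intro u _
        exact (hφd u).hasDerivAt.add ((hasDerivAt_id u).const_mul k)
      · intro u _
        have h9 := hφ'le2 u
        linarith [h9]
    have h5 := hanti (Set.left_mem_Icc.mpr hX) (Set.right_mem_Icc.mpr hX) hX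
    simp only at h5
    have hkX : k * X = φ 0 + 1 := by
      rw [hXdef]; field_simp
    have h6 := (hrange X).1
    nlinarith [h5]
  have hE0 : Ec = 0 := le_antisymm hcle hcge
  have hgsq : ∀ x, g x ^ 2 = -(2 * F (φ x)) := by
    intro x
    have h1 := hEconst x
    rw [hE0] at h1
    linarith
  have hgeq : ∀ x, g x = -Real.sqrt (-(2 * F (φ x))) := by
    intro x
    have h1 : Real.sqrt (g x ^ 2) = -g x := by
      rw [Real.sqrt_sq_eq_abs, abs_of_nonpos (hg0 x)]
    rw [← hgsq x, h1, neg_neg]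
  have hderiv_formula : ∀ x, 0 < φ x →
      deriv φ x = -Real.sqrt (-(2 * F (φ x))) / S.D (φ x) := by
    intro x hx
    have hD : 0 < S.D (φ x) := S.hD_pos _ ⟨hx, (hrange x).2⟩
    rw [eq_div_iff hD.ne']
    have h1 := hgeq x
    rw [hgapp x] at h1
    linarith [h1, mul_comm (deriv φ x) (S.D (φ x))] -- fallback
  have hneg : ∀ x, 0 < φ x → φ x < 1 → deriv φ x < 0 := by
    intro x h0 h1
    have hD : 0 < S.D (φ x) := S.hD_pos _ ⟨h0, (hrange x).2⟩
    have hF : F (φ x) < 0 := hFneg _ ⟨h0, h1⟩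
    have hs : 0 < Real.sqrt (-(2 * F (φ x))) := Real.sqrt_pos.mpr (by linarith)
    rw [hderiv_formula x h0]
    exact div_neg_of_neg_of_pos (by linarith) hD
  -- sqrt upper bound
  have hsqrtF_ub : ∀ u ∈ Set.Icc (0:ℝ) 1,
      Real.sqrt (-(2 * F u)) ≤ Real.sqrt (M * L) * (1 - u) := by
    intro u hu
    have h1 := Real.sqrt_le_sqrt (hFub u hu)
    rwa [Real.sqrt_mul (by positivity) ((1 - u) ^ 2),
      Real.sqrt_sq (by linarith [hu.2])] at h1
  -- lower bound on -F near 0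
  have hslope : Tendsto (slope S.f 0) (𝓝[≠] (0:ℝ)) (𝓝 (deriv S.f 0)) :=
    hasDerivAt_iff_tendsto_slope.mp (hfdiff 0).hasDerivAt
  have hev : ∀ᶠ t in 𝓝[>] (0:ℝ), slope S.f 0 t < deriv S.f 0 / 2 := by
    have hmono2 : 𝓝[>] (0:ℝ) ≤ 𝓝[≠] (0:ℝ) :=
      nhdsWithin_mono 0 (fun t ht => ne_of_gt ht)
    exact (hslope.mono_left hmono2).eventually_lt_const (by linarith [S.hf'0])
  obtain ⟨δ₀, hδ₀, hδ₀p⟩ := mem_nhdsGT_iff_exists_Ioo_subset.mp hev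
  set δ := min δ₀ 1 with hδdef
  have hδpos : 0 < δ := lt_min hδ₀ one_pos
  have hδle1 : δ ≤ 1 := min_le_right _ _
  have hδle0 : δ ≤ δ₀ := min_le_left _ _
  clear_value δ
  have hfδ : ∀ t ∈ Set.Ioo (0:ℝ) δ, S.f t ≤ deriv S.f 0 / 2 * t := by
    intro t ht
    have h1 : t ∈ Set.Ioo (0:ℝ) δ₀ := ⟨ht.1, lt_of_lt_of_le ht.2 hδle0⟩
    have h2 := hδ₀p h1
    rw [Set.mem_setOf_eq, slope_def_field, S.hf0, sub_zero, sub_zero, div_lt_iff₀ ht.1] at h2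
    linarith
  set c₃ := m * (-deriv S.f 0) / 6 with hc₃def
  have hc₃ : 0 < c₃ := by
    have := S.hf'0
    apply div_pos (mul_pos hm (by linarith)) (by norm_num)
  clear_value c₃
  have hFlb : ∀ u ∈ Set.Icc (0:ℝ) δ, c₃ * u ^ 3 ≤ -(F u) := by
    have hmon : MonotoneOn (fun u => -(F u) - c₃ * u ^ 3) (Set.Icc (0:ℝ) δ) := by
      apply aux_mono (G' := fun u => -(S.D u * S.f u) - c₃ * (3 * u ^ 2))
      · intro u _
        have h1 := (hFd u).neg
        have h2 : HasDerivAt (fun y => c₃ * y ^ 3) (c₃ * (3 * u ^ 2)) u := by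
          have h2' := (hasDerivAt_pow 3 u).const_mul c₃
          norm_num at h2'
          exact h2'
        exact h1.sub h2
      · intro u hu
        have hu1 : u ∈ Set.Icc (0:ℝ) 1 := ⟨hu.1.le, le_trans hu.2.le hδle1⟩
        have h1 : m * u ≤ S.D u := hDlb u hu1
        have h2 : S.f u ≤ deriv S.f 0 / 2 * u := hfδ u hu
        have h3 : 0 ≤ S.D u := hDnn u hu1
        have h4 : (-(deriv S.f 0) / 2) * u ≤ -S.f u := by linarith
        have h5 : (m * u) * ((-(deriv S.f 0) / 2) * u) ≤ S.D u * (-S.f u) :=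
          mul_le_mul h1 h4 (by nlinarith [S.hf'0, hu.1]) h3
        rw [hc₃def]
        nlinarith [h5, sq_nonneg u]
    intro u hu
    have h1 : -(F 0) - c₃ * 0 ^ 3 ≤ -(F u) - c₃ * u ^ 3 :=
      hmon (Set.left_mem_Icc.mpr hδpos.le) hu hu.1
    nlinarith [h1, hF0]
  have hsqrtF_lb : ∀ u ∈ Set.Icc (0:ℝ) δ,
      Real.sqrt (2 * c₃) * (u * Real.sqrt u) ≤ Real.sqrt (-(2 * F u)) := by
    intro u hu
    have h1 : 2 * c₃ * u ^ 3 ≤ -(2 * F u) := by linarith [hFlb u hu]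
    have h2 := Real.sqrt_le_sqrt h1
    have h3 : Real.sqrt (u ^ 3) = u * Real.sqrt u := by
      rw [show u ^ 3 = u ^ 2 * u by ring, Real.sqrt_mul (sq_nonneg u),
        Real.sqrt_sq hu.1]
    rwa [show 2 * c₃ * u ^ 3 = (2 * c₃) * u ^ 3 by ring,
      Real.sqrt_mul (by positivity) (u ^ 3), h3] at h2
  -- φ < 1 everywhere
  have hlt1 : ∀ x, φ x < 1 := by
    intro x₀
    by_contra hcon
    push_neg at hcon
    have hφx₀ : φ x₀ = 1 := le_antisymm (hrange x₀).2 hcon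
    obtain ⟨ud, hud, hudle'⟩ := isCompact_Icc.exists_isMinOn
      (Set.nonempty_Icc.mpr (by norm_num : (1/2:ℝ) ≤ 1)) hDc.continuousOn
    have hudle := isMinOn_iff.mp hudle'
    set d := S.D ud with hddef
    have hd : 0 < d := S.hD_pos ud ⟨by linarith [hud.1], hud.2⟩
    clear_value d
    set K := Real.sqrt (M * L) / d with hKdef
    have hK0 : 0 ≤ K := div_nonneg (Real.sqrt_nonneg _) hd.le
    clear_value K
    obtain ⟨b, hb1, hb2⟩ := ((htop.eventually_lt_const
      (by norm_num : (0:ℝ) < 1/2)).and (eventually_ge_atTop x₀)).exists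
    have hmem : (1/2:ℝ) ∈ Set.Icc (φ b) (φ x₀) := ⟨hb1.le, by rw [hφx₀]; norm_num⟩
    obtain ⟨cm, hcm, hφcm⟩ := intermediate_value_Icc' hb2 (hφc.continuousOn) hmem
    have hge : ∀ u ∈ Set.Icc x₀ cm, 1/2 ≤ φ u ∧ φ u ≤ 1 := by
      intro u hu
      constructor
      · rw [← hφcm]; exact hmono hu.2
      · exact (hrange u).2
    have hanti : AntitoneOn (fun x => (1 - φ x) * Real.exp (-(K * x)))
        (Set.Icc x₀ cm) := by
      apply aux_anti (G' := fun x => (-(deriv φ x)) * Real.exp (-(K * x))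
        + (1 - φ x) * (Real.exp (-(K * x)) * (-K)))
      · intro u _
        have h1 : HasDerivAt (fun y => 1 - φ y) (-(deriv φ u)) u :=
          (hφd u).hasDerivAt.const_sub 1
        have h2 : HasDerivAt (fun y => Real.exp (-(K * y)))
            (Real.exp (-(K * u)) * (-K)) u := by
          have h3 : HasDerivAt (fun y : ℝ => -(K * y)) (-K) u := by
            have h3' := ((hasDerivAt_id u).const_mul K).neg; rw [mul_one] at h3'; exact h3'
          exact (Real.hasDerivAt_exp (-(K * u))).comp u h3
        exact h1.mul h2
      · intro u hu
        have hu' := hge u (Set.Ioo_subset_Icc_self hu)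
        have hexp : 0 < Real.exp (-(K * u)) := Real.exp_pos _
        have hkey : -(deriv φ u) ≤ K * (1 - φ u) := by
          rcases eq_or_lt_of_le hu'.2 with h1 | h1
          · have h2 : deriv φ u = 0 := by
              apply IsLocalMax.deriv_eq_zero
              apply Filter.Eventually.of_forall
              intro y
              rw [h1]
              exact (hrange y).2
            rw [h2, h1]
            simp
          · have hφupos : 0 < φ u := by linarith [hu'.1]
            have hD2 : d ≤ S.D (φ u) := hudle (φ u) ⟨hu'.1, hu'.2⟩
            have hDpos : 0 < S.D (φ u) := lt_of_lt_of_le hd hD2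
            rw [hderiv_formula u hφupos, neg_div, neg_neg, div_le_iff₀ hDpos]
            have hs := hsqrtF_ub (φ u) ⟨hφupos.le, hu'.2⟩
            have hKd : K * d = Real.sqrt (M * L) := by
              rw [hKdef]; field_simp
            have e1 : K * (1 - φ u) * d = Real.sqrt (M * L) * (1 - φ u) := by
              rw [← hKd]; ring
            have e2 : K * (1 - φ u) * d ≤ K * (1 - φ u) * S.D (φ u) :=
              mul_le_mul_of_nonneg_left hD2
                (mul_nonneg hK0 (by linarith : (0:ℝ) ≤ 1 - φ u))
            linarith
        have h6 := mul_le_mul_of_nonneg_right hkey hexp.le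
        nlinarith [h6]
    have h7 := hanti (Set.left_mem_Icc.mpr hcm.1) (Set.right_mem_Icc.mpr hcm.1) hcm.1
    simp only at h7
    rw [hφx₀, hφcm] at h7
    have h8 : (0:ℝ) < (1 - 1/2) * Real.exp (-(K * cm)) := by positivity
    simp only [sub_self, zero_mul] at h7
    linarith
  -- φ reaches 0
  have hzero : ∃ x, φ x = 0 := by
    by_contra hno
    push_neg at hno
    have hpos : ∀ x, 0 < φ x := fun x => ((hrange x).1).lt_of_ne (fun e => hno x e.symm)
    set κ := Real.sqrt (2 * c₃) / M with hκdef
    have hκ : 0 < κ := div_pos (Real.sqrt_pos.mpr (by linarith)) hM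
    clear_value κ
    obtain ⟨b, hb⟩ := (htop.eventually_lt_const hδpos).exists
    set X := b + 2/κ * (Real.sqrt (φ b) + 1) with hXdef
    have hbX : b ≤ X := by
      have h1 : 0 ≤ 2/κ * (Real.sqrt (φ b) + 1) := by positivity
      rw [hXdef]; linarith
    clear_value X
    have hanti : AntitoneOn (fun x => Real.sqrt (φ x) + κ/2 * x) (Set.Icc b X) := by
      apply aux_anti (G' := fun x => deriv φ x / (2 * Real.sqrt (φ x)) + κ/2 * 1)
      · intro u _
        exact ((hφd u).hasDerivAt.sqrt (hpos u).ne').add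
          ((hasDerivAt_id u).const_mul (κ/2))
      · intro u hu
        have h1 : 0 < φ u := hpos u
        have h2 : φ u ≤ φ b := hmono hu.1.le
        have h2' : φ u < δ := lt_of_le_of_lt h2 hb
        have hsq : 0 < Real.sqrt (φ u) := Real.sqrt_pos.mpr h1
        have hDpos : 0 < S.D (φ u) := S.hD_pos _ ⟨h1, (hrange u).2⟩
        have hDub2 : S.D (φ u) ≤ M * φ u := hDub (φ u) ⟨h1.le, (hrange u).2⟩
        have hlb := hsqrtF_lb (φ u) ⟨h1.le, h2'.le⟩
        have hkey : deriv φ u ≤ -(κ * Real.sqrt (φ u)) := by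
          rw [hderiv_formula u h1, neg_div]
          have h3 : κ * Real.sqrt (φ u) ≤ Real.sqrt (-(2 * F (φ u))) / S.D (φ u) := by
            rw [le_div_iff₀ hDpos]
            have hκM : κ * M = Real.sqrt (2 * c₃) := by
              rw [hκdef]; field_simp
            have e1 : κ * Real.sqrt (φ u) * (M * φ u)
                = Real.sqrt (2 * c₃) * (φ u * Real.sqrt (φ u)) := by
              rw [← hκM]; ring
            have e2 : κ * Real.sqrt (φ u) * S.D (φ u)
                ≤ κ * Real.sqrt (φ u) * (M * φ u) :=
              mul_le_mul_of_nonneg_left hDub2 (by positivity)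
            linarith
          linarith
        have h4 := (div_le_div_iff_of_pos_right (by positivity : 0 < 2 * Real.sqrt (φ u))).mpr hkey
        have e3 : -(κ * Real.sqrt (φ u)) / (2 * Real.sqrt (φ u)) = -(κ/2) := by
          field_simp
        rw [e3] at h4
        linarith
    have h5 := hanti (Set.left_mem_Icc.mpr hbX) (Set.right_mem_Icc.mpr hbX) hbX
    simp only at h5
    have e4 : κ/2 * X - κ/2 * b = Real.sqrt (φ b) + 1 := by
      rw [hXdef]; field_simp; ring
    have h6 := Real.sqrt_nonneg (φ X)
    linarith
  -- define ω₀
  obtain ⟨z, hz⟩ := hzero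
  have hZne : Set.Nonempty {x | φ x = 0} := ⟨z, hz⟩
  have hZbdd : BddBelow {x | φ x = 0} := by
    obtain ⟨a, ha⟩ := (hbot.eventually_const_lt (by norm_num : (1:ℝ)/2 < 1)).exists
    refine ⟨a, fun y hy => ?_⟩
    by_contra hya
    push_neg at hya
    have h1 : φ a ≤ φ y := hmono hya.le
    rw [Set.mem_setOf_eq] at hy
    rw [hy] at h1
    linarith
  have hZclosed : IsClosed {x | φ x = 0} := isClosed_eq hφc continuous_const
  set ω₀ := sInf {x | φ x = 0} with hω₀def
  have hω₀mem : φ ω₀ = 0 := hZclosed.csInf_mem hZne hZbdd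
  clear_value ω₀
  have hP1 : ∀ x, ω₀ ≤ x → φ x = 0 := fun x hx =>
    le_antisymm (hω₀mem ▸ hmono hx) (hrange x).1
  have hposlt : ∀ x, x < ω₀ → 0 < φ x := by
    intro x hx
    rcases eq_or_lt_of_le (hrange x).1 with h | h
    · exfalso
      have : x ∈ {x | φ x = 0} := h.symm
      have h2 : ω₀ ≤ x := by rw [hω₀def]; exact csInf_le hZbdd this
      exact absurd h2 (not_le.mpr hx)
    · exact h
  have hP2 : ∀ x, x < ω₀ → deriv φ x < 0 := fun x hx =>
    hneg x (hposlt x hx) (hlt1 x)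
  have hderiv0 : ∀ y, φ y = 0 → deriv φ y = 0 := by
    intro y hy
    apply IsLocalMin.deriv_eq_zero
    apply Filter.Eventually.of_forall
    intro z2
    rw [hy]
    exact (hrange z2).1
  refine ⟨ω₀, ⟨hP1, hP2, fun x => ⟨(hrange x).1, hlt1 x⟩⟩, ?_⟩
  intro ω' hω'
  obtain ⟨h1', h2', _⟩ := hω'
  rcases lt_trichotomy ω' ω₀ with h | h | h
  · exfalso
    have ha := hP2 ω' h
    have hb' := hderiv0 ω' (h1' ω' le_rfl)
    linarith
  · exact h
  · exfalso
    have ha := h2' ω₀ h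
    have hb' := hderiv0 ω₀ hω₀mem
    linarith
end
end

section
/- Assume ∫_0^1 D(u)f(u) du = 0 and let φ be the stationary Nagumo front with arrival point ω₀. Then there exists a uniform constant C > 0 such that |D(φ(x)) φ_xx(x)/φ_x(x)| ≤ C for all x ∈ (−∞, ω₀); equivalently, the function x ↦ D(φ)φ_xx/φ_x, extended by 0 on [ω₀,∞), is bounded on ℝ. -/
open MeasureTheory Filter Topology Asymptotics

noncomputable section

/-- `ω₀` is the (finite) arrival point of the front to the degenerate state:
`φ ≡ 0` on `[ω₀, ∞)` and `φ_x < 0` on `(-∞, ω₀)`. -/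
structure Arrival (φ : ℝ → ℝ) (ω₀ : ℝ) : Prop where
  hzero : ∀ x, ω₀ ≤ x → φ x = 0
  hneg : ∀ x, x < ω₀ → deriv φ x < 0

section S7aux
open intervalIntegral

namespace S7
variable (S : NagumoSetup)

lemma contDf : Continuous (fun t => S.D t * S.f t) :=
  (S.hD_C2.continuous).mul (S.hf_C2.continuous)

noncomputable def g : ℝ → ℝ := fun u => ∫ t in (0:ℝ)..u, S.D t * S.f t

lemma g_hasDerivAt (u : ℝ) : HasDerivAt (g S) (S.D u * S.f u) u :=
  intervalIntegral.integral_hasDerivAt_right ((contDf S).intervalIntegrable _ _)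
    ((contDf S).stronglyMeasurableAtFilter _ _) (contDf S).continuousAt

lemma g_zero : g S 0 = 0 := intervalIntegral.integral_same

lemma g_diff : Differentiable ℝ (g S) := fun u => (g_hasDerivAt S u).differentiableAt

end S7

namespace S7
variable (S : NagumoSetup)

lemma g_neg (hDf : (∫ u in (0:ℝ)..1, S.D u * S.f u) = 0) :
    ∀ u ∈ Set.Ioo (0:ℝ) 1, g S u < 0 := by
  intro u hu
  obtain ⟨hu0, hu1⟩ := hu
  rcases le_or_gt u S.α with hcase | hcase
  · have h1 : 0 < ∫ t in (0:ℝ)..u, -(S.D t * S.f t) := by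
      apply intervalIntegral.intervalIntegral_pos_of_pos_on
        (((contDf S).neg).intervalIntegrable _ _)
      · intro t ht
        have ht1 : t ∈ Set.Ioc (0:ℝ) 1 := ⟨ht.1, le_of_lt (lt_of_lt_of_le ht.2 (le_of_lt (lt_of_le_of_lt hcase S.hα.2)))⟩
        have hD := S.hD_pos t ht1
        have hf := S.hf_neg t ⟨ht.1, lt_of_lt_of_le ht.2 hcase⟩
        show 0 < -(S.D t * S.f t)
        nlinarith
      · exact hu0
    rw [intervalIntegral.integral_neg] at h1
    unfold g; linarith
  · have hadj : g S u + (∫ t in u..(1:ℝ), S.D t * S.f t) = ∫ t in (0:ℝ)..1, S.D t * S.f t :=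
      intervalIntegral.integral_add_adjacent_intervals
        ((contDf S).intervalIntegrable _ _) ((contDf S).intervalIntegrable _ _)
    have h2 : 0 < ∫ t in u..(1:ℝ), S.D t * S.f t := by
      apply intervalIntegral.intervalIntegral_pos_of_pos_on ((contDf S).intervalIntegrable _ _)
      · intro t ht
        have hD := S.hD_pos t ⟨lt_trans hu0 ht.1, le_of_lt ht.2⟩
        have hf := S.hf_pos t ⟨lt_trans hcase ht.1, ht.2⟩
        exact mul_pos hD hf
      · exact hu1
    rw [hDf] at hadj; linarith

end S7

namespace S7
variable (S : NagumoSetup)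

lemma exists_bounds : ∃ m L M : ℝ, 0 < m ∧ 0 < L ∧ 0 < M ∧
    (∀ u ∈ Set.Icc (0:ℝ) 1, m ≤ deriv S.D u ∧ deriv S.D u ≤ L ∧ |deriv S.f u| ≤ M) ∧
    (∀ u ∈ Set.Icc (0:ℝ) 1, m * u ≤ S.D u ∧ S.D u ≤ L * u ∧
      |S.f u| ≤ M * u ∧ |S.f u| ≤ M * (1 - u)) := by
  have hDd : Continuous (deriv S.D) := S.hD_C2.continuous_deriv one_le_two
  have hfd : Continuous (deriv S.f) := S.hf_C2.continuous_deriv one_le_two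
  have hne : (Set.Icc (0:ℝ) 1).Nonempty := ⟨0, by norm_num⟩
  obtain ⟨a, ha, hamin⟩ := isCompact_Icc.exists_isMinOn hne hDd.continuousOn
  obtain ⟨b, hb, hbmax⟩ := isCompact_Icc.exists_isMaxOn hne hDd.continuousOn
  obtain ⟨c, hc, hcmax⟩ := isCompact_Icc.exists_isMaxOn hne (hfd.abs.continuousOn)
  set m := deriv S.D a with hm
  set L := max (deriv S.D b) 1 with hL
  set M := max (|deriv S.f c|) 1 with hM
  have hmpos : 0 < m := S.hD'_pos a ha
  have hLpos : 0 < L := lt_of_lt_of_le one_pos (le_max_right _ _)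
  have hMpos : 0 < M := lt_of_lt_of_le one_pos (le_max_right _ _)
  have hkey : ∀ u ∈ Set.Icc (0:ℝ) 1, m ≤ deriv S.D u ∧ deriv S.D u ≤ L ∧ |deriv S.f u| ≤ M := by
    intro u hu
    exact ⟨hamin hu, le_trans (hbmax hu) (le_max_left _ _),
      le_trans (hcmax hu) (le_max_left _ _)⟩
  refine ⟨m, L, M, hmpos, hLpos, hMpos, hkey, ?_⟩
  intro u hu
  have hDdiff : Differentiable ℝ S.D := S.hD_C2.differentiable two_ne_zero
  have hfdiff : Differentiable ℝ S.f := S.hf_C2.differentiable two_ne_zero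
  have h0 : (0:ℝ) ∈ Set.Icc (0:ℝ) 1 := by norm_num
  have h1 : (1:ℝ) ∈ Set.Icc (0:ℝ) 1 := by norm_num
  have hconv : Convex ℝ (Set.Icc (0:ℝ) 1) := convex_Icc 0 1
  have hint : interior (Set.Icc (0:ℝ) 1) ⊆ Set.Icc (0:ℝ) 1 := interior_subset
  have hDlow : m * u ≤ S.D u := by
    have := hconv.mul_sub_le_image_sub_of_le_deriv hDdiff.continuous.continuousOn
      (hDdiff.differentiableOn) (fun x hx => (hkey x (hint hx)).1) 0 h0 u hu hu.1
    simpa [S.hD0] using this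
  have hDhigh : S.D u ≤ L * u := by
    have := hconv.image_sub_le_mul_sub_of_deriv_le hDdiff.continuous.continuousOn
      (hDdiff.differentiableOn) (fun x hx => (hkey x (hint hx)).2.1) 0 h0 u hu hu.1
    simpa [S.hD0] using this
  have hfub : ∀ v ∈ Set.Icc (0:ℝ) 1, ∀ w ∈ Set.Icc (0:ℝ) 1, v ≤ w →
      |S.f w - S.f v| ≤ M * (w - v) := by
    intro v hv w hw hvw
    have hup := hconv.image_sub_le_mul_sub_of_deriv_le hfdiff.continuous.continuousOn
      (hfdiff.differentiableOn)
      (fun x hx => (abs_le.1 (hkey x (hint hx)).2.2).2) v hv w hw hvw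
    have hlo := hconv.mul_sub_le_image_sub_of_le_deriv hfdiff.continuous.continuousOn
      (hfdiff.differentiableOn)
      (fun x hx => (abs_le.1 (hkey x (hint hx)).2.2).1) v hv w hw hvw
    rw [abs_le]; constructor <;> nlinarith
  have hfu0 : |S.f u| ≤ M * u := by
    have := hfub 0 h0 u hu hu.1
    simpa [S.hf0] using this
  have hfu1 : |S.f u| ≤ M * (1 - u) := by
    have := hfub u hu 1 h1 hu.2
    rw [S.hf1] at this
    simpa [abs_sub_comm] using this
  exact ⟨hDlow, hDhigh, hfu0, hfu1⟩

end S7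

namespace S7
variable (S : NagumoSetup)

set_option maxHeartbeats 4000000 in
lemma key_bounds (hDf : (∫ u in (0:ℝ)..1, S.D u * S.f u) = 0) :
    ∃ K : ℝ, 0 < K ∧ ∀ u ∈ Set.Ioo (0:ℝ) 1,
      (S.D u * S.f u)^2 ≤ K * (-2 * g S u) ∧
      (deriv S.D u)^2 * (-2 * g S u) ≤ K * (S.D u)^2 := by
  obtain ⟨m, L, M, hm, hL, hM, hder, hpt⟩ := exists_bounds S
  -- tail representation of g
  have gtail : ∀ u ∈ Set.Icc (0:ℝ) 1, g S u = -∫ t in u..(1:ℝ), S.D t * S.f t := by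
    intro u hu
    have hadj : g S u + (∫ t in u..(1:ℝ), S.D t * S.f t) = ∫ t in (0:ℝ)..1, S.D t * S.f t :=
      intervalIntegral.integral_add_adjacent_intervals
        ((contDf S).intervalIntegrable _ _) ((contDf S).intervalIntegrable _ _)
    rw [hDf] at hadj; linarith
  -- global upper bound for |g|
  have gub : ∀ u ∈ Set.Icc (0:ℝ) 1, -2 * g S u ≤ 2 * L * M * u^3 := by
    intro u hu
    have h1 : |g S u| ≤ ∫ t in (0:ℝ)..u, |S.D t * S.f t| :=
      intervalIntegral.abs_integral_le_integral_abs hu.1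
    have h2 : (∫ t in (0:ℝ)..u, |S.D t * S.f t|) ≤ ∫ t in (0:ℝ)..u, L * M * t^2 := by
      apply intervalIntegral.integral_mono_on hu.1
        ((contDf S).abs.intervalIntegrable _ _)
        (((continuous_const.mul (continuous_pow 2))).intervalIntegrable _ _)
      intro t ht
      have ht1 : t ∈ Set.Icc (0:ℝ) 1 := ⟨ht.1, le_trans ht.2 hu.2⟩
      have hD := (hpt t ht1).2.1
      have hf := (hpt t ht1).2.2.1
      have hDnn : 0 ≤ S.D t := le_trans (by nlinarith [(hpt t ht1).1, ht1.1] : (0:ℝ) ≤ m * t) (hpt t ht1).1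
      rw [abs_mul, abs_of_nonneg hDnn]
      show _ ≤ L * M * t^2
      nlinarith [abs_nonneg (S.f t), ht1.1]
    have h3 : (∫ t in (0:ℝ)..u, L * M * t^2) = L * M * (u^3/3) := by
      rw [intervalIntegral.integral_const_mul, integral_pow]; norm_num
    have h4 : -g S u ≤ |g S u| := neg_le_abs _
    have hu3 : 0 ≤ u^3 := pow_nonneg hu.1 3
    nlinarith [mul_nonneg (mul_nonneg hL.le hM.le) hu3]
  -- near 0
  have hfd : Continuous (deriv S.f) := S.hf_C2.continuous_deriv one_le_two
  set c₀ := -deriv S.f 0 / 2 with hc₀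
  have hc₀pos : 0 < c₀ := by have := S.hf'0; simp [hc₀]; linarith
  obtain ⟨δ, hδpos, hδ⟩ := Metric.continuousAt_iff.1 hfd.continuousAt c₀ hc₀pos
  set δ₀ := min (δ/2) S.α with hδ₀
  have hδ₀pos : 0 < δ₀ := lt_min (by linarith) S.hα.1
  have hδ₀α : δ₀ ≤ S.α := min_le_right _ _
  have hδ₀1 : δ₀ < 1 := lt_of_le_of_lt hδ₀α S.hα.2
  have hf'near0 : ∀ t ∈ Set.Icc (0:ℝ) δ₀, deriv S.f t ≤ -c₀ := by
    intro t ht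
    have : dist t 0 < δ := by
      rw [Real.dist_eq, sub_zero, abs_of_nonneg ht.1]
      exact lt_of_le_of_lt (le_trans ht.2 (min_le_left _ _)) (by linarith)
    have := hδ this
    rw [Real.dist_eq] at this
    have := (abs_lt.1 this).2
    simp only [hc₀] at *; linarith
  have hfneg0 : ∀ t ∈ Set.Icc (0:ℝ) δ₀, S.f t ≤ -c₀ * t := by
    intro t ht
    have hconv : Convex ℝ (Set.Icc (0:ℝ) δ₀) := convex_Icc 0 δ₀
    have hfdiff : Differentiable ℝ S.f := S.hf_C2.differentiable two_ne_zero
    have := hconv.image_sub_le_mul_sub_of_deriv_le hfdiff.continuous.continuousOn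
      hfdiff.differentiableOn
      (fun x hx => hf'near0 x (interior_subset hx)) 0 ⟨le_refl 0, le_of_lt hδ₀pos⟩ t ht ht.1
    simpa [S.hf0] using this
  have glb0 : ∀ u ∈ Set.Ioc (0:ℝ) δ₀, m * c₀ / 3 * u^3 ≤ -g S u := by
    intro u hu
    have hgu : -g S u = ∫ t in (0:ℝ)..u, -(S.D t * S.f t) := by
      unfold g; rw [intervalIntegral.integral_neg]
    rw [hgu]
    have : (∫ t in (0:ℝ)..u, m * c₀ * t^2) ≤ ∫ t in (0:ℝ)..u, -(S.D t * S.f t) := by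
      apply intervalIntegral.integral_mono_on (le_of_lt hu.1)
        ((continuous_const.mul (continuous_pow 2)).intervalIntegrable _ _)
        (((contDf S).neg).intervalIntegrable _ _)
      intro t ht
      have ht1 : t ∈ Set.Icc (0:ℝ) 1 := ⟨ht.1, le_trans ht.2 (le_trans hu.2 (le_of_lt hδ₀1))⟩
      have hDlow := (hpt t ht1).1
      have hft := hfneg0 t ⟨ht.1, le_trans ht.2 hu.2⟩
      have hDnn : 0 ≤ S.D t := le_trans (mul_nonneg hm.le ht1.1) hDlow
      have hprod : m * t * (c₀ * t) ≤ S.D t * (-S.f t) :=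
        mul_le_mul hDlow (by linarith) (mul_nonneg hc₀pos.le ht.1) hDnn
      show m * c₀ * t^2 ≤ -(S.D t * S.f t)
      nlinarith [hprod]
    have heval : (∫ t in (0:ℝ)..u, m * c₀ * t^2) = m * c₀ * (u^3/3) := by
      rw [intervalIntegral.integral_const_mul, integral_pow]; norm_num
    rw [heval] at this; linarith
  -- near 1
  set c₁ := -deriv S.f 1 / 2 with hc₁
  have hc₁pos : 0 < c₁ := by have := S.hf'1; simp [hc₁]; linarith
  obtain ⟨δ', hδ'pos, hδ'⟩ := Metric.continuousAt_iff.1 hfd.continuousAt c₁ hc₁pos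
  set δ₁ := max (1 - δ'/2) (max S.α (1/2)) with hδ₁
  have hδ₁pos : 0 < δ₁ := lt_of_lt_of_le one_half_pos (le_trans (le_max_right _ _) (le_max_right _ _))
  have hδ₁lt1 : δ₁ < 1 := by
    apply max_lt (by linarith) (max_lt S.hα.2 (by norm_num))
  have hδ₀δ₁ : δ₀ ≤ δ₁ := le_trans hδ₀α (le_trans (le_max_left _ _) (le_max_right _ _))
  have hf'near1 : ∀ t ∈ Set.Icc δ₁ (1:ℝ), deriv S.f t ≤ -c₁ := by
    intro t ht
    have h1δ : 1 - δ'/2 ≤ δ₁ := le_max_left _ _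
    have : dist t 1 < δ' := by
      rw [Real.dist_eq, abs_of_nonpos (by linarith [ht.2])]
      linarith [ht.1]
    have := hδ' this
    rw [Real.dist_eq] at this
    have := (abs_lt.1 this).2
    simp only [hc₁] at *; linarith
  have hfpos1 : ∀ t ∈ Set.Icc δ₁ (1:ℝ), c₁ * (1 - t) ≤ S.f t := by
    intro t ht
    have hconv : Convex ℝ (Set.Icc δ₁ (1:ℝ)) := convex_Icc _ _
    have hfdiff : Differentiable ℝ S.f := S.hf_C2.differentiable two_ne_zero
    have := hconv.image_sub_le_mul_sub_of_deriv_le hfdiff.continuous.continuousOn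
      hfdiff.differentiableOn
      (fun x hx => hf'near1 x (interior_subset hx)) t ht 1 ⟨le_of_lt hδ₁lt1, le_refl 1⟩ ht.2
    rw [S.hf1] at this
    nlinarith
  have glb1 : ∀ u ∈ Set.Ico δ₁ (1:ℝ), m * δ₁ * c₁ * ((1-u)^2/2) ≤ -g S u := by
    intro u hu
    have hu1 : u ∈ Set.Icc (0:ℝ) 1 := ⟨le_trans hδ₁pos.le hu.1, hu.2.le⟩
    have hgu : -g S u = ∫ t in u..(1:ℝ), S.D t * S.f t := by
      rw [gtail u hu1]; ring
    rw [hgu]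
    have hmono : (∫ t in u..(1:ℝ), m * δ₁ * c₁ * (1 - t)) ≤ ∫ t in u..(1:ℝ), S.D t * S.f t := by
      apply intervalIntegral.integral_mono_on hu.2.le
        ((continuous_const.mul (continuous_const.sub continuous_id)).intervalIntegrable _ _)
        ((contDf S).intervalIntegrable _ _)
      intro t ht
      have ht1 : t ∈ Set.Icc (0:ℝ) 1 := ⟨le_trans hu1.1 ht.1, ht.2⟩
      have hDlow := (hpt t ht1).1
      have hDδ : m * δ₁ ≤ S.D t := le_trans (by nlinarith [le_trans hu.1 ht.1]) hDlow
      have hft := hfpos1 t ⟨le_trans hu.1 ht.1, ht.2⟩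
      have hfnn : 0 ≤ S.f t := le_trans (mul_nonneg hc₁pos.le (by linarith [ht.2])) hft
      have hprod : m * δ₁ * (c₁ * (1 - t)) ≤ S.D t * S.f t :=
        mul_le_mul hDδ hft (mul_nonneg hc₁pos.le (by linarith [ht.2]))
          (le_trans (mul_nonneg hm.le hδ₁pos.le) hDδ)
      show m * δ₁ * c₁ * (1 - t) ≤ S.D t * S.f t
      nlinarith [hprod]
    have heval : (∫ t in u..(1:ℝ), m * δ₁ * c₁ * (1 - t)) = m * δ₁ * c₁ * ((1-u)^2/2) := by
      rw [intervalIntegral.integral_const_mul]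
      have heq : (∫ t in u..(1:ℝ), (1 - t)) = (1-u)^2/2 := by
        rw [intervalIntegral.integral_sub (intervalIntegrable_const)
          (intervalIntegral.intervalIntegrable_id), intervalIntegral.integral_const,
          integral_id]
        simp only [smul_eq_mul, mul_one]
        ring
      rw [heq]
    rw [heval] at hmono; exact hmono
  -- middle
  have hgcont : Continuous (g S) := (g_diff S).continuous
  obtain ⟨w, hw, hwmax⟩ := isCompact_Icc.exists_isMaxOn (Set.nonempty_Icc.2 hδ₀δ₁)
    hgcont.continuousOn
  set ε := -g S w with hε
  have hεpos : 0 < ε := by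
    have : g S w < 0 := g_neg S hDf w ⟨lt_of_lt_of_le hδ₀pos hw.1, lt_of_le_of_lt hw.2 hδ₁lt1⟩
    simp [hε]; linarith
  have gmid : ∀ u ∈ Set.Icc δ₀ δ₁, ε ≤ -g S u := by
    intro u hu
    have h2 : g S u ≤ g S w := hwmax hu
    simp only [hε]; linarith
  -- assemble the constant
  set K₀ := 3 * L^2 * M^2 / (2 * m * c₀) with hK₀
  set K₁ := L^2 * M^2 / (m * δ₁ * c₁) with hK₁
  set K₂ := L^2 * M^2 / (2 * ε) with hK₂
  set KR := 2 * L^3 * M / m^2 with hKR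
  have hK₀pos : 0 < K₀ := by positivity
  have hK₁pos : 0 < K₁ := by positivity
  have hK₂pos : 0 < K₂ := by positivity
  have hKRpos : 0 < KR := by positivity
  refine ⟨max (max K₀ K₁) (max K₂ KR), lt_of_lt_of_le hK₀pos (le_trans (le_max_left _ _) (le_max_left _ _)), ?_⟩
  intro u hu
  have hu1 : u ∈ Set.Icc (0:ℝ) 1 := ⟨hu.1.le, hu.2.le⟩
  have hgneg : g S u < 0 := g_neg S hDf u hu
  have hgnn : 0 ≤ -2 * g S u := by linarith
  obtain ⟨hDlow, hDhigh, hfu0, hfu1⟩ := hpt u hu1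
  have hDle : S.D u ≤ L := le_trans hDhigh (by nlinarith [hu.2.le])
  have hDnn : 0 ≤ S.D u := le_trans (mul_nonneg hm.le hu.1.le) hDlow
  have hfM : |S.f u| ≤ M := le_trans hfu0 (by nlinarith [hu.2.le])
  constructor
  · -- Q part
    have hQfinal : (S.D u * S.f u)^2 ≤ (max (max K₀ K₁) (max K₂ KR)) * (-2 * g S u) := by
      rcases le_or_gt u δ₀ with hcase | hcase
      · -- u ∈ (0, δ₀]
        have hglb := glb0 u ⟨hu.1, hcase⟩
        have hsq : (S.D u * S.f u)^2 ≤ L^2 * M^2 * u^3 := by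
          have h1 : |S.D u * S.f u| ≤ L * u * (M * u) := by
            rw [abs_mul, abs_of_nonneg hDnn]
            exact mul_le_mul hDhigh hfu0 (abs_nonneg _) (by nlinarith [hu.1.le])
          have h2 : (S.D u * S.f u)^2 ≤ (L * u * (M * u))^2 := by
            rw [← sq_abs]; exact pow_le_pow_left₀ (abs_nonneg _) h1 2
          have hu4 : u^4 ≤ u^3 := by nlinarith [pow_nonneg hu.1.le 3, hu.2.le, hu.1.le]
          have h3 : (L * u * (M * u))^2 = L^2 * M^2 * u^4 := by ring
          have h4 := mul_le_mul_of_nonneg_left hu4 (show (0:ℝ) ≤ L^2 * M^2 by positivity)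
          linarith [h2, h3 ▸ h2]
        have : L^2 * M^2 * u^3 ≤ K₀ * (-2 * g S u) := by
          rw [hK₀]
          rw [div_mul_eq_mul_div, le_div_iff₀ (by positivity)]
          have h := mul_le_mul_of_nonneg_left hglb (show (0:ℝ) ≤ 6 * L^2 * M^2 by positivity)
          nlinarith [h]
        calc (S.D u * S.f u)^2 ≤ K₀ * (-2 * g S u) := le_trans hsq this
          _ ≤ _ := mul_le_mul_of_nonneg_right (le_trans (le_max_left _ _) (le_max_left _ _)) hgnn
      · rcases le_or_gt u δ₁ with hcase2 | hcase2
        · -- middle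
          have hglb := gmid u ⟨hcase.le, hcase2⟩
          have hsq : (S.D u * S.f u)^2 ≤ L^2 * M^2 := by
            have h1 : |S.D u * S.f u| ≤ L * M := by
              rw [abs_mul, abs_of_nonneg hDnn]
              exact mul_le_mul hDle hfM (abs_nonneg _) hL.le
            have h2 := pow_le_pow_left₀ (abs_nonneg (S.D u * S.f u)) h1 2
            rw [sq_abs] at h2
            calc (S.D u * S.f u)^2 ≤ (L*M)^2 := h2
              _ = L^2 * M^2 := by ring
          have : L^2 * M^2 ≤ K₂ * (-2 * g S u) := by
            rw [hK₂, div_mul_eq_mul_div, le_div_iff₀ (by positivity)]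
            have h := mul_le_mul_of_nonneg_left hglb (show (0:ℝ) ≤ 2 * L^2 * M^2 by positivity)
            nlinarith [h]
          calc (S.D u * S.f u)^2 ≤ K₂ * (-2 * g S u) := le_trans hsq this
            _ ≤ _ := mul_le_mul_of_nonneg_right (le_trans (le_max_left _ _) (le_max_right _ _)) hgnn
        · -- near 1
          have hglb := glb1 u ⟨hcase2.le, hu.2⟩
          have hsq : (S.D u * S.f u)^2 ≤ L^2 * M^2 * (1-u)^2 := by
            have h1 : |S.D u * S.f u| ≤ L * (M * (1-u)) := by
              rw [abs_mul, abs_of_nonneg hDnn]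
              exact mul_le_mul hDle hfu1 (abs_nonneg _) hL.le
            have h2 := pow_le_pow_left₀ (abs_nonneg (S.D u * S.f u)) h1 2
            rw [sq_abs] at h2
            calc (S.D u * S.f u)^2 ≤ (L * (M * (1-u)))^2 := h2
              _ = L^2 * M^2 * (1-u)^2 := by ring
          have : L^2 * M^2 * (1-u)^2 ≤ K₁ * (-2 * g S u) := by
            rw [hK₁, div_mul_eq_mul_div, le_div_iff₀ (by positivity)]
            have h := mul_le_mul_of_nonneg_left hglb (show (0:ℝ) ≤ 2 * L^2 * M^2 by positivity)
            nlinarith [h]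
          calc (S.D u * S.f u)^2 ≤ K₁ * (-2 * g S u) := le_trans hsq this
            _ ≤ _ := mul_le_mul_of_nonneg_right (le_trans (le_max_right _ _) (le_max_left _ _)) hgnn
    exact hQfinal
  · -- R part
    have hgub := gub u hu1
    have hD'le : deriv S.D u ≤ L := (hder u hu1).2.1
    have hD'nn : 0 ≤ deriv S.D u := le_of_lt (S.hD'_pos u hu1)
    have h1 : (deriv S.D u)^2 * (-2 * g S u) ≤ L^2 * (2 * L * M * u^3) := by
      apply mul_le_mul _ hgub hgnn (by positivity)
      nlinarith [hD'le, hD'nn]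
    have h2 : L^2 * (2 * L * M * u^3) ≤ KR * (m * u)^2 := by
      rw [hKR]
      rw [div_mul_eq_mul_div, le_div_iff₀ (by positivity)]
      have hu32 : u^3 ≤ u^2 := by nlinarith [pow_nonneg hu.1.le 2, hu.2.le, hu.1.le]
      have h := mul_le_mul_of_nonneg_left hu32 (show (0:ℝ) ≤ 2 * L^3 * M * m^2 by positivity)
      nlinarith [h]
    have h3 : KR * (m * u)^2 ≤ KR * (S.D u)^2 := by
      apply mul_le_mul_of_nonneg_left _ hKRpos.le
      exact pow_le_pow_left₀ (mul_nonneg hm.le hu.1.le) hDlow 2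
    calc (deriv S.D u)^2 * (-2 * g S u) ≤ KR * (S.D u)^2 := le_trans h1 (le_trans h2 h3)
      _ ≤ _ := mul_le_mul_of_nonneg_right (le_trans (le_max_right _ _) (le_max_right _ _)) (sq_nonneg _)

end S7

end S7aux

open S7 in
set_option maxHeartbeats 1000000 in
/-- The coefficient `D(φ) φ_xx / φ_x` is uniformly bounded on `(-∞, ω₀)`. -/
theorem statement7 (S : NagumoSetup)
    (hDf : (∫ u in (0:ℝ)..1, S.D u * S.f u) = 0)
    (φ : ℝ → ℝ) (ω₀ : ℝ) (hφ : StatFront S φ)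
    (hrange : ∀ x, 0 ≤ φ x ∧ φ x < 1) (hω : Arrival φ ω₀) :
    ∃ C : ℝ, 0 < C ∧ ∀ x, x < ω₀ → |S.D (φ x) * deriv (deriv φ) x / deriv φ x| ≤ C := by
  obtain ⟨K, hKpos, hK⟩ := key_bounds S hDf
  have hφdiff : Differentiable ℝ φ := hφ.hC1.differentiable one_ne_zero
  have hφx : ∀ y, HasDerivAt φ (deriv φ y) y := fun y => (hφdiff y).hasDerivAt
  have hDdiff : Differentiable ℝ S.D := S.hD_C2.differentiable two_ne_zero
  -- P has derivative -f(φ)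
  have hP : ∀ y, HasDerivAt (fun z => S.D (φ z) * deriv φ z) (-S.f (φ y)) y := by
    intro y
    have h := (hφ.hflux y).hasDerivAt
    have heq : deriv (fun z => S.D (φ z) * deriv φ z) y = -S.f (φ y) := by
      have := hφ.hode y; linarith
    rwa [heq] at h
  -- energy identity
  have energy : ∀ x, (S.D (φ x) * deriv φ x)^2 = -2 * g S (φ x) := by
    have hE : ∀ y, HasDerivAt
        (fun z => (S.D (φ z) * deriv φ z)^2 + 2 * g S (φ z)) 0 y := by
      intro y
      have h1 : HasDerivAt (fun z => (S.D (φ z) * deriv φ z)^2)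
          (2 * (S.D (φ y) * deriv φ y) ^ 1 * (-S.f (φ y))) y := (hP y).pow 2
      have h2 : HasDerivAt (fun z => g S (φ z)) (S.D (φ y) * S.f (φ y) * deriv φ y) y :=
        (g_hasDerivAt S (φ y)).comp y (hφx y)
      have h3 := h1.add (h2.const_mul 2)
      have h4 : 2 * (S.D (φ y) * deriv φ y) ^ 1 * -S.f (φ y)
          + 2 * (S.D (φ y) * S.f (φ y) * deriv φ y) = 0 := by ring
      rwa [h4] at h3
    have hEdiff : Differentiable ℝ (fun z => (S.D (φ z) * deriv φ z)^2 + 2 * g S (φ z)) :=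
      fun y => (hE y).differentiableAt
    intro x
    have hconst := is_const_of_deriv_eq_zero hEdiff (fun y => (hE y).deriv) x ω₀
    have hzero : (S.D (φ ω₀) * deriv φ ω₀)^2 + 2 * g S (φ ω₀) = 0 := by
      rw [hω.hzero ω₀ le_rfl, S.hD0, g_zero]; ring
    rw [hzero] at hconst; linarith
  -- positivity of φ on (-∞, ω₀)
  have hφpos : ∀ x, x < ω₀ → 0 < φ x := by
    intro x hx
    have hstrict : StrictAntiOn φ (Set.Icc x ω₀) :=
      strictAntiOn_of_deriv_neg (convex_Icc _ _) hφdiff.continuous.continuousOn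
        (fun y hy => hω.hneg y (by rw [interior_Icc] at hy; exact hy.2))
    have := hstrict ⟨le_rfl, hx.le⟩ ⟨hx.le, le_rfl⟩ hx
    rw [hω.hzero ω₀ le_rfl] at this
    exact this
  refine ⟨2 * Real.sqrt K + 1, by positivity, ?_⟩
  intro x hx
  set u := φ x with hu
  set p := deriv φ x with hp
  have hppos : p < 0 := hω.hneg x hx
  have hpne : p ≠ 0 := ne_of_lt hppos
  have huIoo : u ∈ Set.Ioo (0:ℝ) 1 := ⟨hφpos x hx, (hrange x).2⟩
  have hDu : 0 < S.D u := S.hD_pos u ⟨huIoo.1, huIoo.2.le⟩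
  have hDune : S.D u ≠ 0 := ne_of_gt hDu
  -- second derivative via quotient rule
  have hDφ : HasDerivAt (fun z => S.D (φ z)) (deriv S.D u * p) x :=
    ((hDdiff u).hasDerivAt).comp x (hφx x)
  have hq : HasDerivAt (fun z => (S.D (φ z) * deriv φ z) / S.D (φ z))
      ((-S.f u * S.D u - (S.D u * p) * (deriv S.D u * p)) / (S.D u)^2) x :=
    (hP x).div hDφ hDune
  have hEE : deriv φ =ᶠ[𝓝 x] (fun z => (S.D (φ z) * deriv φ z) / S.D (φ z)) := by
    filter_upwards [Iio_mem_nhds hx] with y hy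
    have hDy : S.D (φ y) ≠ 0 :=
      ne_of_gt (S.hD_pos (φ y) ⟨hφpos y hy, (hrange y).2.le⟩)
    field_simp
  have hdd : deriv (deriv φ) x
      = (-S.f u * S.D u - (S.D u * p) * (deriv S.D u * p)) / (S.D u)^2 := by
    rw [hEE.deriv_eq]; exact hq.deriv
  have hTeq : S.D u * deriv (deriv φ) x / p = -(S.f u / p + deriv S.D u * p) := by
    rw [hdd]; field_simp; ring
  -- bounds
  have hgid : -2 * g S u = (S.D u * p)^2 := (energy x).symm
  have hDp2 : (0:ℝ) < (S.D u * p)^2 := by positivity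
  obtain ⟨hQ, hR⟩ := hK u huIoo
  have hQ2 : (S.f u / p)^2 ≤ K := by
    rw [div_pow]
    rw [div_le_iff₀ (by positivity : (0:ℝ) < p^2)]
    have h1 : (S.D u * S.f u)^2 ≤ K * (S.D u * p)^2 := by rw [← hgid]; exact hQ
    have h2 : (S.D u)^2 > 0 := by positivity
    nlinarith [h1]
  have hR2 : (deriv S.D u * p)^2 ≤ K := by
    have h1 : (deriv S.D u)^2 * (S.D u * p)^2 ≤ K * (S.D u)^2 := by rw [← hgid]; exact hR
    have h2 : (S.D u)^2 > 0 := by positivity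
    nlinarith [h1]
  have habs : ∀ a : ℝ, a^2 ≤ K → |a| ≤ Real.sqrt K := by
    intro a ha
    rw [← Real.sqrt_sq_eq_abs]
    exact Real.sqrt_le_sqrt ha
  calc |S.D u * deriv (deriv φ) x / p|
      = |S.f u / p + deriv S.D u * p| := by rw [hTeq, abs_neg]
    _ ≤ |S.f u / p| + |deriv S.D u * p| := abs_add_le _ _
    _ ≤ Real.sqrt K + Real.sqrt K := add_le_add (habs _ hQ2) (habs _ hR2)
    _ ≤ 2 * Real.sqrt K + 1 := by linarith
end
end
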